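/- arXiv:1512.03514 — 6 statements merged into one kernel-verified Lean document; each statement's English description precedes it below -/
import Mathlib

section
/- For every μ ≥ 0, every x > 0 and every y > 0, the series Σ_{n=1}^∞ |ξ_{μ,n}(y)| · K_{μ+n+1}(x)/K_{μ+n}(x) converges (is finite). -/
open MeasureTheory ProbabilityTheory Real Filter Set
open scoped ENNReal NNReal Topology

/-- Modified Bessel function of the first kind `I_μ(x)`, defined by its series. -/
noncomputable def besselI (μ x : ℝ) : ℝ :=
  ∑' k : ℕ, (x / 2) ^ (2 * (k : ℝ) + μ) / ((k.factorial : ℝ) * Real.Gamma ((k : ℝ) + μ + 1))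

/-- Macdonald function (modified Bessel function of the second kind) `K_μ(x)`. -/
noncomputable def besselK (μ x : ℝ) : ℝ :=
  ∫ t in Set.Ioi (0 : ℝ), Real.exp (-(x * Real.cosh t)) * Real.cosh (μ * t)

/-- `S_m = 2 π^{(m+1)/2} / Γ((m+1)/2)`, the surface area of the `m`-dimensional unit sphere. -/
noncomputable def sphereArea (m : ℕ) : ℝ :=
  2 * Real.pi ^ (((m : ℝ) + 1) / 2) / Real.Gamma (((m : ℝ) + 1) / 2)

/-- The coefficient `ξ_{μ,n}(y)`. -/
noncomputable def xiCoef (μ : ℝ) (n : ℕ) (y : ℝ) : ℝ :=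
  if μ = 0 ∧ n = 0 then besselI 0 y ^ 2 / 2
  else (-1 : ℝ) ^ n * (μ + n) * Real.Gamma (2 * μ + n) * besselI (μ + n) y ^ 2
    / (n.factorial : ℝ)

/-- The coefficient `ζ_{μ,n}(y)`. -/
noncomputable def zetaCoef (μ : ℝ) (n : ℕ) (y : ℝ) : ℝ :=
  if μ = 0 ∧ n = 0 then besselI 0 y * besselI 1 y / 2
  else (-1 : ℝ) ^ n * (μ + n) * Real.Gamma (2 * μ + n) * besselI (μ + n) y
    * besselI (μ + n + 1) y / (n.factorial : ℝ)

/-- A standard `d`-dimensional Brownian motion on a probability space `(Ω, P)`. -/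
structure IsBrownianMotion {Ω : Type*} [MeasurableSpace Ω] (P : Measure Ω) (d : ℕ)
    (B : ℝ → Ω → EuclideanSpace ℝ (Fin d)) : Prop where
  isProb : IsProbabilityMeasure P
  meas : ∀ t : ℝ, Measurable (B t)
  cont : ∀ᵐ ω ∂P, Continuous fun t : ℝ => B t ω
  init : ∀ᵐ ω ∂P, B 0 ω = 0
  indep_incr : ∀ (n : ℕ) (t : Fin (n + 1) → ℝ), Monotone t → (∀ i, 0 ≤ t i) →
    iIndepFun
      (fun i : Fin n => fun ω => B (t i.succ) ω - B (t i.castSucc) ω) P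
  gauss_coord : ∀ s t : ℝ, 0 ≤ s → s ≤ t → ∀ i : Fin d,
    Measure.map (fun ω => (B t ω - B s ω) i) P = gaussianReal 0 (Real.toNNReal (t - s))
  indep_coord : ∀ s t : ℝ, 0 ≤ s → s ≤ t →
    iIndepFun
      (fun (i : Fin d) (ω : Ω) => (B t ω - B s ω) i) P

/-- Hitting time of the closed ball of radius `r` by the drifted process `B(s)+sv` started
shifted by `x`. -/
noncomputable def hitTime {Ω : Type*} {d : ℕ} (B : ℝ → Ω → EuclideanSpace ℝ (Fin d))
    (v x : EuclideanSpace ℝ (Fin d)) (r : ℝ) (ω : Ω) : ℝ :=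
  sInf {s : ℝ | 0 ≤ s ∧ ‖B s ω + s • v + x‖ ≤ r}

/-- `L_v^d(t) = ∫_{ℝ^d ∖ D} P(τ_v(x) ≤ t) dx`. -/
noncomputable def sausageL {Ω : Type*} [MeasurableSpace Ω] (P : Measure Ω) {d : ℕ}
    (B : ℝ → Ω → EuclideanSpace ℝ (Fin d)) (v : EuclideanSpace ℝ (Fin d)) (r t : ℝ) : ℝ :=
  ∫ x in (Metric.closedBall (0 : EuclideanSpace ℝ (Fin d)) r)ᶜ,
    (P {ω | hitTime B v x r ω ≤ t}).toReal

/-- `Σ_v^m(t) = e^{-|v|² t / 2} L_0^m(t)`, where `L0` stands for `L_0^m`. -/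
noncomputable def sigmaV (vnorm : ℝ) (L0 : ℝ → ℝ) (t : ℝ) : ℝ :=
  Real.exp (-(vnorm ^ 2 * t / 2)) * L0 t

/-- `Σ̃_v^m(t)`. -/
noncomputable def sigmaTilde (vnorm : ℝ) (L0 : ℝ → ℝ) (t : ℝ) : ℝ :=
  sigmaV vnorm L0 t + vnorm ^ 2 * ∫ s in (0:ℝ)..t, sigmaV vnorm L0 s
    + vnorm ^ 4 / 4 * ∫ s in (0:ℝ)..t, (t - s) * sigmaV vnorm L0 s

/-- The function `F_μ(λ)` (depending on `|v|` and `r`). -/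
noncomputable def Fmu (vnorm r μ lam : ℝ) : ℝ :=
  Real.sqrt (2 * lam + vnorm ^ 2) / lam ^ 2
    * besselK (μ + 1) (r * Real.sqrt (2 * lam + vnorm ^ 2))
    / besselK μ (r * Real.sqrt (2 * lam + vnorm ^ 2))

/-- The Gegenbauer polynomial `C_n^μ(x)` for `μ > 0`. -/
noncomputable def gegenbauerC (μ : ℝ) (n : ℕ) (x : ℝ) : ℝ :=
  (1 / Real.Gamma μ) * ∑ m ∈ Finset.range (n / 2 + 1),
    (-1 : ℝ) ^ m * Real.Gamma (μ + n - m) / ((m.factorial : ℝ) * ((n - 2 * m).factorial : ℝ))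
      * (2 * x) ^ (n - 2 * m)

/-- The constant `N_v^d` (as a function of `|v|`), the linear growth rate of the expected
volume of the Wiener sausage with drift. -/
noncomputable def NvD (d : ℕ) (r y : ℝ) : ℝ :=
  if d = 2 then
    Real.pi * besselI 0 (r * y) / besselK 0 (r * y)
      + 2 * Real.pi * ∑' n : ℕ,
        (-1 : ℝ) ^ (n + 1) * besselI ((n : ℝ) + 1) (r * y) / besselK ((n : ℝ) + 1) (r * y)
  else
    Real.pi * sphereArea (d - 2) / y ^ ((d : ℝ) - 2) * ∑' n : ℕ,
      (-1 : ℝ) ^ n * (((d : ℝ) / 2 - 1) + n) * Real.Gamma (2 * ((d : ℝ) / 2 - 1) + n)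
        / (n.factorial : ℝ)
        * besselI (((d : ℝ) / 2 - 1) + n) (r * y) / besselK (((d : ℝ) / 2 - 1) + n) (r * y)

section Aux

lemma pow_div_fact_le_exp' {u : ℝ} (hu : 0 ≤ u) (m : ℕ) : u ^ m / m.factorial ≤ Real.exp u := by
  calc u ^ m / m.factorial ≤ ∑ i ∈ Finset.range (m+1), u ^ i / i.factorial := by
        refine Finset.single_le_sum (f := fun i => u ^ i / (i.factorial : ℝ)) ?_
          (Finset.self_mem_range_succ m)
        intro i _
        positivity
    _ ≤ Real.exp u := Real.sum_le_exp_of_nonneg hu _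

lemma cosh_le_exp' {t : ℝ} (ht : 0 ≤ t) : Real.cosh t ≤ Real.exp t := by
  rw [Real.cosh_eq]
  have : Real.exp (-t) ≤ Real.exp t := Real.exp_le_exp.2 (by linarith)
  linarith

lemma exp_div_two_le_cosh' (t : ℝ) : Real.exp t / 2 ≤ Real.cosh t := by
  rw [Real.cosh_eq]
  have := Real.exp_pos (-t)
  linarith

lemma besselK_integrand_nonneg' (μ x t : ℝ) :
    0 ≤ Real.exp (-(x * Real.cosh t)) * Real.cosh (μ * t) :=
  mul_nonneg (Real.exp_pos _).le (Real.cosh_pos _).le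

lemma besselK_nonneg' (μ x : ℝ) : 0 ≤ besselK μ x :=
  setIntegral_nonneg measurableSet_Ioi fun t _ => besselK_integrand_nonneg' μ x t

lemma besselK_integrand_le' {μ x : ℝ} (hx : 0 < x) (hμ : 0 ≤ μ) (m : ℕ) (hm : μ ≤ m)
    {t : ℝ} (ht : 0 ≤ t) :
    Real.exp (-(x * Real.cosh t)) * Real.cosh (μ * t)
      ≤ (m.factorial : ℝ) * (4 / x) ^ m * (8 / x) * Real.exp (-t) := by
  have het : (0:ℝ) < Real.exp t := Real.exp_pos t
  set F : ℝ := (m.factorial : ℝ) * (4 / x) ^ m with hF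
  have hFpos : 0 < F := by positivity
  have h1 : Real.cosh (μ * t) ≤ Real.exp ((m : ℝ) * t) :=
    (cosh_le_exp' (by positivity)).trans (Real.exp_le_exp.2 (by nlinarith))
  have hsplit : Real.exp (-(x * Real.cosh t)) ≤
      Real.exp (-(x / 4 * Real.exp t)) * (Real.exp (-(x / 8 * Real.exp t))
        * Real.exp (-(x / 8 * Real.exp t))) := by
    rw [← Real.exp_add, ← Real.exp_add]
    apply Real.exp_le_exp.2
    have := exp_div_two_le_cosh' t
    nlinarith
  have h3 : Real.exp (-(x / 8 * Real.exp t)) ≤ (8 / x) * Real.exp (-t) := by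
    have ha : (0:ℝ) < x / 8 * Real.exp t := by positivity
    have hu : x / 8 * Real.exp t ≤ Real.exp (x / 8 * Real.exp t) :=
      (Real.add_one_le_exp _).trans' (by linarith)
    have hinv : (Real.exp (x / 8 * Real.exp t))⁻¹ ≤ (x / 8 * Real.exp t)⁻¹ :=
      inv_anti₀ ha hu
    have heq : (x / 8 * Real.exp t)⁻¹ = 8 / x * Real.exp (-t) := by
      rw [Real.exp_neg]
      field_simp
    rw [Real.exp_neg]
    rw [heq] at hinv
    exact hinv
  have h4 : Real.exp (-(x / 8 * Real.exp t)) ≤ 1 := by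
    rw [Real.exp_le_one_iff]
    nlinarith
  have h2 : Real.exp (-(x / 4 * Real.exp t)) * Real.exp ((m : ℝ) * t) ≤ F := by
    have hkey : (x / 4 * Real.exp t) ^ m / m.factorial ≤ Real.exp (x / 4 * Real.exp t) :=
      pow_div_fact_le_exp' (by positivity) m
    have hkey2 : Real.exp ((m:ℝ) * t) ≤ F * Real.exp (x / 4 * Real.exp t) := by
      calc Real.exp ((m:ℝ) * t) = F * ((x / 4 * Real.exp t) ^ m / m.factorial) := by
            rw [Real.exp_nat_mul, hF, mul_pow]
            have : (m.factorial : ℝ) ≠ 0 := by positivity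
            have hx0 : x ≠ 0 := hx.ne'
            field_simp
            ring_nf
            rw [← mul_pow, ← mul_pow, ← mul_pow, mul_inv_cancel₀ hx0]
            norm_num
        _ ≤ F * Real.exp (x / 4 * Real.exp t) :=
            mul_le_mul_of_nonneg_left hkey hFpos.le
    rw [Real.exp_neg, inv_mul_le_iff₀ (Real.exp_pos _)]
    linarith [hkey2]
  calc Real.exp (-(x * Real.cosh t)) * Real.cosh (μ * t)
      ≤ (Real.exp (-(x / 4 * Real.exp t)) * (Real.exp (-(x / 8 * Real.exp t))
          * Real.exp (-(x / 8 * Real.exp t)))) * Real.exp ((m : ℝ) * t) := by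
        apply mul_le_mul hsplit h1 (Real.cosh_pos _).le (by positivity)
    _ = (Real.exp (-(x / 4 * Real.exp t)) * Real.exp ((m : ℝ) * t))
          * Real.exp (-(x / 8 * Real.exp t)) * Real.exp (-(x / 8 * Real.exp t)) := by ring
    _ ≤ F * ((8 / x) * Real.exp (-t)) * 1 := by
        apply mul_le_mul _ h4 (Real.exp_pos _).le (by positivity)
        apply mul_le_mul h2 h3 (Real.exp_pos _).le hFpos.le
    _ = F * (8 / x) * Real.exp (-t) := by ring

lemma besselK_integrableOn' {μ x : ℝ} (hx : 0 < x) (hμ : 0 ≤ μ) :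
    IntegrableOn (fun t => Real.exp (-(x * Real.cosh t)) * Real.cosh (μ * t)) (Ioi (0:ℝ)) := by
  obtain ⟨m, hm⟩ := exists_nat_ge μ
  have hg : IntegrableOn (fun t => (m.factorial : ℝ) * (4 / x) ^ m * (8 / x) * Real.exp (-t))
      (Ioi (0:ℝ)) := by
    have := exp_neg_integrableOn_Ioi (0:ℝ) (one_pos)
    simpa [IntegrableOn] using this.const_mul ((m.factorial : ℝ) * (4 / x) ^ m * (8 / x))
  refine hg.mono' ?_ ?_
  · apply Continuous.aestronglyMeasurable
    fun_prop
  · filter_upwards [ae_restrict_mem measurableSet_Ioi] with t ht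
    rw [Real.norm_eq_abs, abs_of_nonneg (besselK_integrand_nonneg' μ x t)]
    exact besselK_integrand_le' hx hμ m hm (le_of_lt ht)

lemma besselK_le' {μ x : ℝ} (hx : 0 < x) (hμ : 0 ≤ μ) (m : ℕ) (hm : μ ≤ m) :
    besselK μ x ≤ (m.factorial : ℝ) * (4 / x) ^ m * (8 / x) := by
  have hg : IntegrableOn (fun t => (m.factorial : ℝ) * (4 / x) ^ m * (8 / x) * Real.exp (-t))
      (Ioi (0:ℝ)) := by
    have := exp_neg_integrableOn_Ioi (0:ℝ) (one_pos)
    simpa [IntegrableOn] using this.const_mul ((m.factorial : ℝ) * (4 / x) ^ m * (8 / x))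
  calc besselK μ x ≤ ∫ t in Ioi (0:ℝ),
        (m.factorial : ℝ) * (4 / x) ^ m * (8 / x) * Real.exp (-t) := by
        refine setIntegral_mono_on (besselK_integrableOn' hx hμ) hg measurableSet_Ioi ?_
        intro t ht
        exact besselK_integrand_le' hx hμ m hm (le_of_lt ht)
    _ = (m.factorial : ℝ) * (4 / x) ^ m * (8 / x) * ∫ t in Ioi (0:ℝ), Real.exp (-t) := by
        rw [integral_const_mul]
    _ = (m.factorial : ℝ) * (4 / x) ^ m * (8 / x) := by
        rw [integral_exp_neg_Ioi_zero, mul_one]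

lemma besselK_ge' {μ x : ℝ} (hx : 0 < x) (hμ : 0 ≤ μ) :
    Real.exp (-(x * Real.cosh 1)) ≤ besselK μ x := by
  have hsub : Ioc (0:ℝ) 1 ⊆ Ioi 0 := Ioc_subset_Ioi_self
  have hint := besselK_integrableOn' hx hμ (x := x) (μ := μ)
  calc Real.exp (-(x * Real.cosh 1))
      = ∫ _ in Ioc (0:ℝ) 1, Real.exp (-(x * Real.cosh 1)) := by
        simp [Real.volume_Ioc]
    _ ≤ ∫ t in Ioc (0:ℝ) 1, Real.exp (-(x * Real.cosh t)) * Real.cosh (μ * t) := by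
        refine setIntegral_mono_on (integrableOn_const (by simp [Real.volume_Ioc]))
          (hint.mono_set hsub) measurableSet_Ioc ?_
        intro t ht
        have h1 : Real.exp (-(x * Real.cosh t)) ≥ Real.exp (-(x * Real.cosh 1)) := by
          apply Real.exp_le_exp.2
          have : Real.cosh t ≤ Real.cosh 1 := by
            rw [Real.cosh_le_cosh, abs_of_nonneg ht.1.le, abs_one]
            exact ht.2
          nlinarith
        calc Real.exp (-(x * Real.cosh 1)) ≤ Real.exp (-(x * Real.cosh t)) * 1 := by
              linarith
          _ ≤ Real.exp (-(x * Real.cosh t)) * Real.cosh (μ * t) :=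
              mul_le_mul_of_nonneg_left (Real.one_le_cosh _) (Real.exp_pos _).le
    _ ≤ besselK μ x := by
        refine setIntegral_mono_set hint ?_ (HasSubset.Subset.eventuallyLE hsub)
        filter_upwards with t using besselK_integrand_nonneg' μ x t

lemma Gamma_factorial_le' {ν : ℝ} (hν : 0 ≤ ν) (k : ℕ) :
    Real.Gamma (ν + 1) * (k.factorial : ℝ) ≤ Real.Gamma ((k : ℝ) + ν + 1) := by
  induction k with
  | zero => simp
  | succ k ih =>
    have hpos : (0:ℝ) < (k : ℝ) + ν + 1 := by positivity
    have hrec : Real.Gamma (((k:ℝ) + 1) + ν + 1) = ((k:ℝ) + ν + 1) * Real.Gamma ((k:ℝ) + ν + 1) := by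
      have : ((k:ℝ) + 1) + ν + 1 = ((k:ℝ) + ν + 1) + 1 := by ring
      rw [this, Real.Gamma_add_one hpos.ne']
    have hfact : ((k+1).factorial : ℝ) = ((k:ℝ) + 1) * (k.factorial : ℝ) := by
      push_cast [Nat.factorial_succ]
      ring
    have hG1 : 0 < Real.Gamma (ν + 1) := Real.Gamma_pos_of_pos (by linarith)
    push_cast
    rw [hrec, hfact]
    calc Real.Gamma (ν + 1) * (((k:ℝ) + 1) * (k.factorial : ℝ))
        = ((k:ℝ) + 1) * (Real.Gamma (ν + 1) * (k.factorial : ℝ)) := by ring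
      _ ≤ ((k:ℝ) + ν + 1) * Real.Gamma ((k:ℝ) + ν + 1) := by
          apply mul_le_mul (by linarith) ih (by positivity) (by linarith)

lemma besselI_nonneg' {ν y : ℝ} (hν : 0 ≤ ν) (hy : 0 < y) : 0 ≤ besselI ν y := by
  apply tsum_nonneg
  intro k
  have h1 : (0:ℝ) < (y/2) ^ (2 * (k:ℝ) + ν) := Real.rpow_pos_of_pos (by linarith) _
  have h2 : (0:ℝ) < Real.Gamma ((k:ℝ) + ν + 1) := Real.Gamma_pos_of_pos (by positivity)
  positivity

lemma besselI_le' {ν y : ℝ} (hν : 0 ≤ ν) (hy : 0 < y) :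
    besselI ν y ≤ (y/2) ^ ν * (∑' k : ℕ, ((y/2)^2) ^ k / (k.factorial : ℝ))
      / Real.Gamma (ν + 1) := by
  have hy2 : (0:ℝ) < y / 2 := by linarith
  have hG1 : 0 < Real.Gamma (ν + 1) := Real.Gamma_pos_of_pos (by linarith)
  have hsum : Summable (fun k : ℕ => ((y/2)^2) ^ k / (k.factorial : ℝ)) :=
    Real.summable_pow_div_factorial _
  have hterm : ∀ k : ℕ, (y / 2) ^ (2 * (k : ℝ) + ν) / ((k.factorial : ℝ) * Real.Gamma ((k : ℝ) + ν + 1))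
      ≤ (y/2) ^ ν / Real.Gamma (ν + 1) * (((y/2)^2) ^ k / (k.factorial : ℝ)) := by
    intro k
    have hGk : 0 < Real.Gamma ((k:ℝ) + ν + 1) := Real.Gamma_pos_of_pos (by positivity)
    have hfp : (0:ℝ) < (k.factorial : ℝ) := by positivity
    have hpow : (y / 2) ^ (2 * (k : ℝ) + ν) = ((y/2)^2) ^ k * (y/2) ^ ν := by
      rw [Real.rpow_add hy2]
      congr 1
      rw [← Real.rpow_natCast (((y:ℝ)/2)^2) k, ← Real.rpow_natCast ((y:ℝ)/2) 2,
        ← Real.rpow_mul hy2.le]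
      norm_num [mul_comm]
    rw [hpow]
    rw [div_le_iff₀ (by positivity)]
    have hden : Real.Gamma (ν + 1) * (k.factorial : ℝ) ≤ Real.Gamma ((k:ℝ) + ν + 1) :=
      Gamma_factorial_le' hν k
    calc ((y/2)^2) ^ k * (y/2) ^ ν
        = ((y/2) ^ ν / Real.Gamma (ν + 1) * (((y/2)^2) ^ k / (k.factorial : ℝ)))
          * (Real.Gamma (ν+1) * (k.factorial : ℝ)) := by
          field_simp
      _ ≤ ((y/2) ^ ν / Real.Gamma (ν + 1) * (((y/2)^2) ^ k / (k.factorial : ℝ)))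
          * ((k.factorial : ℝ) * Real.Gamma ((k:ℝ) + ν + 1)) := by
          apply mul_le_mul_of_nonneg_left _ ?_
          · rw [mul_comm ((k.factorial:ℝ))]
            calc Real.Gamma (ν+1) * (k.factorial : ℝ)
                ≤ Real.Gamma ((k:ℝ) + ν + 1) := hden
              _ ≤ Real.Gamma ((k:ℝ) + ν + 1) * (k.factorial : ℝ) := by
                  have hf1 : (1:ℝ) ≤ (k.factorial : ℝ) := Nat.one_le_cast.2 (Nat.factorial_pos k)
                  nlinarith [hGk, hf1]
          · have := Real.rpow_pos_of_pos hy2 ν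
            positivity
  have hsumf : Summable (fun k : ℕ => (y / 2) ^ (2 * (k : ℝ) + ν)
      / ((k.factorial : ℝ) * Real.Gamma ((k : ℝ) + ν + 1))) := by
    apply Summable.of_nonneg_of_le _ hterm (hsum.mul_left _)
    intro k
    have h1 : (0:ℝ) < (y/2) ^ (2 * (k:ℝ) + ν) := Real.rpow_pos_of_pos hy2 _
    have h2 : (0:ℝ) < Real.Gamma ((k:ℝ) + ν + 1) := Real.Gamma_pos_of_pos (by positivity)
    positivity
  calc besselI ν y ≤ ∑' k : ℕ, (y/2) ^ ν / Real.Gamma (ν + 1) * (((y/2)^2) ^ k / (k.factorial : ℝ)) :=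
        Summable.tsum_le_tsum hterm hsumf (hsum.mul_left _)
    _ = (y/2) ^ ν * (∑' k : ℕ, ((y/2)^2) ^ k / (k.factorial : ℝ)) / Real.Gamma (ν + 1) := by
        rw [tsum_mul_left]
        ring

lemma b_ratio_eq (μ x y : ℝ) (hμ : 0 ≤ μ) (hx : 0 < x) (hy : 0 < y) (E Klow : ℝ) (M n : ℕ) :
    ((μ+((n:ℝ)+1)+1) * Real.Gamma (2*μ+((n:ℝ)+1)+1)
        * ((y/2) ^ (μ+((n:ℝ)+1)+1) * E / Real.Gamma (μ+((n:ℝ)+1)+2))^2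
      / (((n+1)+1).factorial : ℝ)
      * ((((M+(n+1)+2).factorial : ℝ)) * (4/x)^(M+(n+1)+2) * (8/x) / Klow))
    = ((μ+(n:ℝ)+1) * Real.Gamma (2*μ+(n:ℝ)+1)
        * ((y/2) ^ (μ+(n:ℝ)+1) * E / Real.Gamma (μ+(n:ℝ)+2))^2
      / ((n+1).factorial : ℝ)
      * ((((M+n+2).factorial : ℝ)) * (4/x)^(M+n+2) * (8/x) / Klow))
      * ((μ+(n:ℝ)+2)*(2*μ+(n:ℝ)+1)*((M:ℝ)+(n:ℝ)+3) * (y^2/x)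
          / ((μ+(n:ℝ)+1)*((n:ℝ)+2)*(μ+(n:ℝ)+2)^2)) := by
  have hy2 : (0:ℝ) < y/2 := by linarith
  have hG1 : Real.Gamma (2*μ+((n:ℝ)+1)+1) = (2*μ+(n:ℝ)+1) * Real.Gamma (2*μ+(n:ℝ)+1) := by
    rw [show 2*μ+((n:ℝ)+1)+1 = (2*μ+(n:ℝ)+1)+1 by ring,
      Real.Gamma_add_one (by positivity)]
  have hG2 : Real.Gamma (μ+((n:ℝ)+1)+2) = (μ+(n:ℝ)+2) * Real.Gamma (μ+(n:ℝ)+2) := by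
    rw [show μ+((n:ℝ)+1)+2 = (μ+(n:ℝ)+2)+1 by ring,
      Real.Gamma_add_one (by positivity)]
  have hP : (y/2:ℝ) ^ (μ+((n:ℝ)+1)+1) = (y/2) ^ (μ+(n:ℝ)+1) * (y/2) := by
    rw [show μ+((n:ℝ)+1)+1 = (μ+(n:ℝ)+1)+1 by ring, Real.rpow_add_one hy2.ne']
  have hf1 : (((n+1)+1).factorial : ℝ) = ((n:ℝ)+2) * ((n+1).factorial : ℝ) := by
    rw [show (n+1)+1 = (n+2) from rfl, Nat.factorial_succ]
    push_cast
    ring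
  have hf2 : (((M+(n+1)+2)).factorial : ℝ) = ((M:ℝ)+(n:ℝ)+3) * ((M+n+2).factorial : ℝ) := by
    rw [show M+(n+1)+2 = (M+n+2)+1 by ring, Nat.factorial_succ]
    push_cast
    ring
  have hq : (4/x:ℝ)^(M+(n+1)+2) = (4/x)^(M+n+2) * (4/x) := by
    rw [show M+(n+1)+2 = (M+n+2)+1 by ring, pow_succ]
  rw [hG1, hG2, hP, hf1, hf2, hq]
  have hGn1 : Real.Gamma (2*μ+(n:ℝ)+1) ≠ 0 := (Real.Gamma_pos_of_pos (by positivity)).ne'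
  have hGn2 : Real.Gamma (μ+(n:ℝ)+2) ≠ 0 := (Real.Gamma_pos_of_pos (by positivity)).ne'
  have hfn1 : ((n+1).factorial : ℝ) ≠ 0 := by positivity
  have hfn2 : ((M+n+2).factorial : ℝ) ≠ 0 := by positivity
  have h1 : (μ+(n:ℝ)+1) ≠ 0 := by positivity
  have h2 : (μ+(n:ℝ)+2) ≠ 0 := by positivity
  have h3 : ((n:ℝ)+2) ≠ 0 := by positivity
  rcases eq_or_ne Klow 0 with hK | hK
  · simp [hK]
  · field_simp
    ring

end Aux

/-- Lemma 2.3, first claim. -/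
theorem summable_xi_mul_besselK_ratio (μ x y : ℝ) (hμ : 0 ≤ μ) (hx : 0 < x) (hy : 0 < y) :
    Summable fun n : ℕ =>
      |xiCoef μ (n + 1) y| * (besselK (μ + (n : ℝ) + 2) x / besselK (μ + (n : ℝ) + 1) x) := by
  have hy2 : (0:ℝ) < y / 2 := by linarith
  set E : ℝ := ∑' k : ℕ, ((y/2)^2) ^ k / (k.factorial : ℝ) with hE
  have hEsum : Summable (fun k : ℕ => ((y/2)^2) ^ k / (k.factorial : ℝ)) :=
    Real.summable_pow_div_factorial _
  have hE1 : (1:ℝ) ≤ E := by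
    have h0 : (((y/2)^2) ^ 0 / ((Nat.factorial 0 : ℕ) : ℝ)) = 1 := by norm_num
    calc (1:ℝ) = ((y/2)^2) ^ 0 / ((Nat.factorial 0 : ℕ) : ℝ) := h0.symm
      _ ≤ E := Summable.le_tsum hEsum 0 (fun i _ => by positivity)
  have hEpos : (0:ℝ) < E := lt_of_lt_of_le one_pos hE1
  set M : ℕ := ⌈μ⌉₊ with hM
  have hμM : μ ≤ (M:ℝ) := Nat.le_ceil μ
  set Klow : ℝ := Real.exp (-(x * Real.cosh 1)) with hKlow
  have hKlowpos : 0 < Klow := Real.exp_pos _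
  set b : ℕ → ℝ := fun n =>
    (μ+(n:ℝ)+1) * Real.Gamma (2*μ+(n:ℝ)+1)
      * ((y/2) ^ (μ+(n:ℝ)+1) * E / Real.Gamma (μ+(n:ℝ)+2))^2
      / ((n+1).factorial : ℝ)
      * ((((M+n+2).factorial : ℝ)) * (4/x)^(M+n+2) * (8/x) / Klow) with hb
  have hbpos : ∀ n : ℕ, 0 < b n := by
    intro n
    have hG1 : 0 < Real.Gamma (2*μ+(n:ℝ)+1) := Real.Gamma_pos_of_pos (by positivity)
    have hG2 : 0 < Real.Gamma (μ+(n:ℝ)+2) := Real.Gamma_pos_of_pos (by positivity)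
    have hP : 0 < (y/2 : ℝ) ^ (μ+(n:ℝ)+1) := Real.rpow_pos_of_pos hy2 _
    have h1 : (0:ℝ) < (μ+(n:ℝ)+1) := by positivity
    rw [hb]
    have hsq : 0 < ((y/2 : ℝ) ^ (μ+(n:ℝ)+1) * E / Real.Gamma (μ+(n:ℝ)+2))^2 := by positivity
    positivity
  have hle : ∀ n : ℕ,
      |xiCoef μ (n + 1) y| * (besselK (μ + (n : ℝ) + 2) x / besselK (μ + (n : ℝ) + 1) x) ≤ b n := by
    intro n
    have hG1 : 0 < Real.Gamma (2*μ+(n:ℝ)+1) := Real.Gamma_pos_of_pos (by positivity)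
    have hG2 : 0 < Real.Gamma (μ+(n:ℝ)+2) := Real.Gamma_pos_of_pos (by positivity)
    have hInn : 0 ≤ besselI (μ+(n:ℝ)+1) y := besselI_nonneg' (by positivity) hy
    have hIle : besselI (μ+(n:ℝ)+1) y ≤ (y/2) ^ (μ+(n:ℝ)+1) * E / Real.Gamma (μ+(n:ℝ)+2) := by
      have h := besselI_le' (ν := μ+(n:ℝ)+1) (by positivity) hy
      rw [show μ+(n:ℝ)+1+1 = μ+(n:ℝ)+2 by ring] at h
      exact h
    have harg1 : μ + (((n+1) : ℕ) : ℝ) = μ + (n:ℝ) + 1 := by push_cast; ring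
    have harg2 : 2*μ + (((n+1) : ℕ) : ℝ) = 2*μ + (n:ℝ) + 1 := by push_cast; ring
    have hxiv : xiCoef μ (n+1) y = (-1:ℝ)^(n+1)
        * ((μ+(n:ℝ)+1) * Real.Gamma (2*μ+(n:ℝ)+1) * besselI (μ+(n:ℝ)+1) y ^ 2
          / (((n+1).factorial : ℕ) : ℝ)) := by
      rw [xiCoef, if_neg (by simp), harg1, harg2]
      ring
    have hxiabs : |xiCoef μ (n+1) y|
        = (μ+(n:ℝ)+1) * Real.Gamma (2*μ+(n:ℝ)+1) * besselI (μ+(n:ℝ)+1) y ^ 2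
          / (((n+1).factorial : ℕ) : ℝ) := by
      rw [hxiv, abs_mul, abs_pow, abs_neg, abs_one, one_pow, one_mul, abs_of_nonneg]
      apply div_nonneg _ (by positivity)
      apply mul_nonneg (mul_nonneg (by positivity) hG1.le) (sq_nonneg _)
    have hxiA : |xiCoef μ (n+1) y|
        ≤ (μ+(n:ℝ)+1) * Real.Gamma (2*μ+(n:ℝ)+1)
          * ((y/2) ^ (μ+(n:ℝ)+1) * E / Real.Gamma (μ+(n:ℝ)+2))^2 / ((n+1).factorial : ℝ) := by
      rw [hxiabs]
      gcongr
    have hKub : besselK (μ+(n:ℝ)+2) x ≤ ((M+n+2).factorial : ℝ) * (4/x)^(M+n+2) * (8/x) :=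
      besselK_le' hx (by positivity) (M+n+2) (by push_cast; linarith)
    have hKlb : Klow ≤ besselK (μ+(n:ℝ)+1) x := besselK_ge' hx (by positivity)
    have hrat : besselK (μ+(n:ℝ)+2) x / besselK (μ+(n:ℝ)+1) x
        ≤ (((M+n+2).factorial : ℝ) * (4/x)^(M+n+2) * (8/x)) / Klow :=
      div_le_div₀ (by positivity) hKub hKlowpos hKlb
    calc |xiCoef μ (n + 1) y| * (besselK (μ + (n : ℝ) + 2) x / besselK (μ + (n : ℝ) + 1) x)
        ≤ ((μ+(n:ℝ)+1) * Real.Gamma (2*μ+(n:ℝ)+1)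
            * ((y/2) ^ (μ+(n:ℝ)+1) * E / Real.Gamma (μ+(n:ℝ)+2))^2 / ((n+1).factorial : ℝ))
          * ((((M+n+2).factorial : ℝ)) * (4/x)^(M+n+2) * (8/x) / Klow) := by
          apply mul_le_mul hxiA hrat
            (div_nonneg (besselK_nonneg' _ _) (besselK_nonneg' _ _))
            ((abs_nonneg _).trans hxiA)
      _ = b n := rfl
  have hbsum : Summable b := by
    apply summable_of_ratio_norm_eventually_le (r := 1/2) (by norm_num)
    filter_upwards [eventually_ge_atTop ⌈4*(y^2/x)*((M:ℝ)+3)⌉₊] with n hn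
    rw [Real.norm_eq_abs, Real.norm_eq_abs, abs_of_pos (hbpos _), abs_of_pos (hbpos _)]
    have hreq : b (n+1) = b n * ((μ+(n:ℝ)+2)*(2*μ+(n:ℝ)+1)*((M:ℝ)+(n:ℝ)+3) * (y^2/x)
        / ((μ+(n:ℝ)+1)*((n:ℝ)+2)*(μ+(n:ℝ)+2)^2)) := by
      have h := b_ratio_eq μ x y hμ hx hy E Klow M n
      simp only [hb]
      push_cast
      convert h using 2
    have hd : 4*(y^2/x)*((M:ℝ)+3) ≤ (n:ℝ)+2 := by
      have h1 : ((⌈4*(y^2/x)*((M:ℝ)+3)⌉₊ : ℕ) : ℝ) ≤ (n:ℝ) := Nat.cast_le.2 hn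
      have h2 := Nat.le_ceil (4*(y^2/x)*((M:ℝ)+3))
      linarith
    have hMnn : (0:ℝ) ≤ (M:ℝ) := Nat.cast_nonneg M
    have hnnn : (0:ℝ) ≤ (n:ℝ) := Nat.cast_nonneg n
    have hρ : (μ+(n:ℝ)+2)*(2*μ+(n:ℝ)+1)*((M:ℝ)+(n:ℝ)+3) * (y^2/x)
        / ((μ+(n:ℝ)+1)*((n:ℝ)+2)*(μ+(n:ℝ)+2)^2) ≤ 1/2 := by
      rw [div_le_iff₀ (by positivity)]
      have hB : (M:ℝ)+(n:ℝ)+3 ≤ ((M:ℝ)+3)*(μ+(n:ℝ)+2) := by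
        nlinarith [mul_nonneg hMnn hμ, mul_nonneg hMnn hnnn]
      calc (μ+(n:ℝ)+2)*(2*μ+(n:ℝ)+1)*((M:ℝ)+(n:ℝ)+3) * (y^2/x)
          ≤ (μ+(n:ℝ)+2)*(2*(μ+(n:ℝ)+1))*(((M:ℝ)+3)*(μ+(n:ℝ)+2)) * (y^2/x) := by
            gcongr
            · linarith
        _ = (μ+(n:ℝ)+1)*(μ+(n:ℝ)+2)^2 * (2*((y^2/x)*((M:ℝ)+3))) := by ring
        _ ≤ (μ+(n:ℝ)+1)*(μ+(n:ℝ)+2)^2 * (((n:ℝ)+2)/2) := by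
            apply mul_le_mul_of_nonneg_left _ (by positivity)
            nlinarith [hd]
        _ = 1/2*((μ+(n:ℝ)+1)*((n:ℝ)+2)*(μ+(n:ℝ)+2)^2) := by ring
    rw [hreq]
    calc b n * ((μ+(n:ℝ)+2)*(2*μ+(n:ℝ)+1)*((M:ℝ)+(n:ℝ)+3) * (y^2/x)
        / ((μ+(n:ℝ)+1)*((n:ℝ)+2)*(μ+(n:ℝ)+2)^2))
        ≤ b n * (1/2) := by
          apply mul_le_mul_of_nonneg_left hρ (hbpos n).le
      _ = 1/2 * b n := by ring
  exact Summable.of_nonneg_of_le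
    (fun n => mul_nonneg (abs_nonneg _)
      (div_nonneg (besselK_nonneg' _ _) (besselK_nonneg' _ _))) hle hbsum
end

section
/- For every x > 0 and every μ ≥ 1/2, the Macdonald function satisfies K_μ(x) ≥ (2^{μ−1}/x^μ) Γ(μ) e^{−x}. -/
open MeasureTheory ProbabilityTheory Real Filter Set
open scoped ENNReal NNReal Topology

namespace BesselKProof

open scoped Nat


/-- `x^n ≤ n! e^x` for `x ≥ 0`. -/
lemma pow_le_factorial_mul_exp {x : ℝ} (hx : 0 ≤ x) (n : ℕ) :
    x ^ n ≤ (n ! : ℝ) * Real.exp x := by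
  have h := Real.pow_div_factorial_le_exp x hx n
  have hn : (0:ℝ) < (n ! : ℝ) := by positivity
  calc x ^ n = x ^ n / (n ! : ℝ) * (n ! : ℝ) := by field_simp
    _ ≤ Real.exp x * (n ! : ℝ) := by gcongr
    _ = (n ! : ℝ) * Real.exp x := mul_comm _ _

lemma exp_neg_le_factorial_div {t : ℝ} (ht : 0 < t) (n : ℕ) :
    Real.exp (-t) ≤ (n ! : ℝ) / t ^ n := by
  rw [Real.exp_neg, inv_le_comm₀ (Real.exp_pos t) (by positivity), inv_div]
  exact Real.pow_div_factorial_le_exp t ht.le n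

/-- Key integrability lemma: `s^a e^{-(bs) - c/s}` is integrable on `(0,∞)`. -/
lemma integrable_aux (a : ℝ) {b c : ℝ} (hb : 0 < b) (hc : 0 < c) :
    IntegrableOn (fun s : ℝ => s ^ a * Real.exp (-(b * s) - c / s)) (Ioi (0:ℝ)) := by
  obtain ⟨n, hn⟩ : ∃ n : ℕ, |a| ≤ n := exists_nat_ge |a|
  set M : ℝ := (n ! : ℝ) / c ^ n + (n ! : ℝ) * (2 / b) ^ n with hM
  have key : ∀ s ∈ Ioi (0:ℝ),
      ‖s ^ a * Real.exp (-(b * s) - c / s)‖ ≤ M * Real.exp (-(b/2) * s) := by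
    intro s hs
    rw [mem_Ioi] at hs
    have h1 : (0:ℝ) < s ^ a := Real.rpow_pos_of_pos hs a
    have hsplit : Real.exp (-(b * s) - c / s)
        = Real.exp (-(c/s)) * Real.exp (-(b*s)) := by
      rw [← Real.exp_add]; ring_nf
    rw [Real.norm_eq_abs, abs_of_nonneg (by positivity)]
    have hMpos1 : (0:ℝ) ≤ (n ! : ℝ) / c ^ n := by positivity
    have hMpos2 : (0:ℝ) ≤ (n ! : ℝ) * (2 / b) ^ n := by positivity
    rcases le_or_gt s 1 with h | h
    · -- small s
      have ha1 : -(n:ℝ) ≤ a := by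
        have := neg_abs_le a; have : -(n:ℝ) ≤ -|a| := by linarith
        linarith [neg_abs_le a]
      have e1 : s ^ a ≤ s ^ (-(n:ℝ)) := Real.rpow_le_rpow_of_exponent_ge hs h ha1
      have e2 : Real.exp (-(c/s)) ≤ (n ! : ℝ) / (c/s) ^ n :=
        exp_neg_le_factorial_div (by positivity) n
      have e3 : s ^ (-(n:ℝ)) = (s ^ n)⁻¹ := by
        rw [Real.rpow_neg hs.le, Real.rpow_natCast]
      have e4 : s ^ a * Real.exp (-(c/s)) ≤ (n ! : ℝ) / c ^ n := by
        calc s ^ a * Real.exp (-(c/s)) ≤ (s ^ n)⁻¹ * ((n ! : ℝ) / (c/s) ^ n) := by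
              rw [← e3]
              exact mul_le_mul e1 e2 (Real.exp_pos _).le (by positivity)
          _ = (n ! : ℝ) / c ^ n := by
              rw [div_pow]
              field_simp
      calc s ^ a * Real.exp (-(b * s) - c / s)
          = (s ^ a * Real.exp (-(c/s))) * Real.exp (-(b*s)) := by rw [hsplit]; ring
        _ ≤ ((n ! : ℝ) / c ^ n) * Real.exp (-(b/2) * s) := by
            apply mul_le_mul e4 _ (Real.exp_pos _).le hMpos1
            apply Real.exp_le_exp.mpr; nlinarith
        _ ≤ M * Real.exp (-(b/2) * s) := by
            apply mul_le_mul_of_nonneg_right _ (Real.exp_pos _).le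
            rw [hM]; linarith
    · -- large s
      have ha1 : a ≤ (n:ℝ) := le_trans (le_abs_self a) hn
      have e1 : s ^ a ≤ s ^ n := by
        rw [← Real.rpow_natCast s n]
        exact Real.rpow_le_rpow_of_exponent_le h.le ha1
      have e2 : s ^ n ≤ (n ! : ℝ) * (2/b) ^ n * Real.exp ((b/2) * s) := by
        have h2 : ((b/2) * s) ^ n ≤ (n ! : ℝ) * Real.exp ((b/2)*s) :=
          pow_le_factorial_mul_exp (by positivity) n
        have hbs : b/2*s*(2/b) = s := by field_simp
        have h3 : s ^ n = ((b/2)*s) ^ n * (2/b) ^ n := by rw [← mul_pow, hbs]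
        rw [h3]
        calc ((b/2)*s) ^ n * (2/b) ^ n ≤ (n ! : ℝ) * Real.exp ((b/2)*s) * (2/b) ^ n := by
              apply mul_le_mul_of_nonneg_right h2 (by positivity)
          _ = (n ! : ℝ) * (2/b) ^ n * Real.exp ((b/2)*s) := by ring
      have e5 : Real.exp (-(c/s)) ≤ 1 := Real.exp_le_one_iff.mpr (neg_nonpos.mpr (by positivity))
      calc s ^ a * Real.exp (-(b * s) - c / s)
          = s ^ a * Real.exp (-(c/s)) * Real.exp (-(b*s)) := by rw [hsplit]; ring
        _ ≤ s ^ n * 1 * Real.exp (-(b*s)) := by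
            apply mul_le_mul_of_nonneg_right _ (Real.exp_pos _).le
            exact mul_le_mul e1 e5 (Real.exp_pos _).le (by positivity)
        _ = s ^ n * Real.exp (-(b*s)) := by ring
        _ ≤ ((n ! : ℝ) * (2/b) ^ n * Real.exp ((b/2) * s)) * Real.exp (-(b*s)) := by
            apply mul_le_mul_of_nonneg_right e2 (Real.exp_pos _).le
        _ = ((n ! : ℝ) * (2/b) ^ n) * Real.exp (-(b/2) * s) := by
            rw [mul_assoc, ← Real.exp_add]; ring_nf
        _ ≤ M * Real.exp (-(b/2) * s) := by
            apply mul_le_mul_of_nonneg_right _ (Real.exp_pos _).le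
            rw [hM]; linarith
  have hmeas : AEStronglyMeasurable (fun s : ℝ => s ^ a * Real.exp (-(b * s) - c / s))
      (volume.restrict (Ioi (0:ℝ))) := by
    apply Measurable.aestronglyMeasurable
    fun_prop
  have hint : IntegrableOn (fun s : ℝ => M * Real.exp (-(b/2) * s)) (Ioi (0:ℝ)) :=
    (exp_neg_integrableOn_Ioi 0 (half_pos hb)).const_mul M
  exact hint.mono' hmeas ((ae_restrict_iff' measurableSet_Ioi).mpr (ae_of_all _ key))

/-- variant with `b = 1` and exponent written as `-s - c/s`. -/
lemma integrable_aux' (a : ℝ) {c : ℝ} (hc : 0 < c) :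
    IntegrableOn (fun s : ℝ => s ^ a * Real.exp (-s - c / s)) (Ioi (0:ℝ)) := by
  simpa using integrable_aux a one_pos hc


/-- The auxiliary integral `A(x) = ∫_{(0,∞)} s^(μ-1) e^{-s - x²/(4s)} ds`. -/
noncomputable def Aint (μ x : ℝ) : ℝ :=
  ∫ s in Ioi (0:ℝ), s ^ (μ - 1) * Real.exp (-s - x ^ 2 / (4 * s))

lemma integrable_A (μ : ℝ) {x : ℝ} (hx : x ≠ 0) :
    IntegrableOn (fun s : ℝ => s ^ (μ-1) * Real.exp (-s - x ^ 2 / (4 * s))) (Ioi (0:ℝ)) := by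
  have := integrable_aux' (μ-1) (c := x^2/4) (by positivity)
  simpa [div_div] using this

lemma integrable_A' (μ : ℝ) {x : ℝ} (hx : x ≠ 0) :
    IntegrableOn (fun s : ℝ =>
      s ^ (μ-1) * (Real.exp (-s - x ^ 2 / (4 * s)) * (-(2*x/(4*s))))) (Ioi (0:ℝ)) := by
  have h := (integrable_aux' (μ-2) (c := x^2/4) (by positivity)).const_mul (-(x/2))
  apply MeasureTheory.IntegrableOn.congr_fun h _ measurableSet_Ioi
  intro s hs
  rw [mem_Ioi] at hs
  have h2 : s ^ (μ-2) = s ^ (μ-1) / s := by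
    rw [show μ - 2 = (μ-1) - 1 by ring, Real.rpow_sub hs, Real.rpow_one]
  show -(x/2) * (s ^ (μ-2) * Real.exp (-s - x^2/4/s))
      = s ^ (μ-1) * (Real.exp (-s - x^2/(4*s)) * (-(2*x/(4*s))))
  rw [h2, div_div]
  field_simp
  ring

lemma continuous_A (μ : ℝ) (hμ : 0 < μ) : Continuous (Aint μ) := by
  apply continuous_of_dominated (bound := fun s => s ^ (μ-1) * Real.exp (-s))
  · intro x
    apply Measurable.aestronglyMeasurable
    fun_prop
  · intro x
    refine (ae_restrict_iff' measurableSet_Ioi).mpr (ae_of_all _ fun s hs => ?_)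
    rw [mem_Ioi] at hs
    have h1 : (0:ℝ) < s ^ (μ-1) := Real.rpow_pos_of_pos hs _
    rw [Real.norm_eq_abs, abs_of_nonneg (by positivity)]
    have : Real.exp (-s - x ^ 2 / (4*s)) ≤ Real.exp (-s) := by
      apply Real.exp_le_exp.mpr
      have : 0 ≤ x ^ 2 / (4*s) := by positivity
      linarith
    exact mul_le_mul_of_nonneg_left this h1.le
  · have := Real.GammaIntegral_convergent hμ
    apply MeasureTheory.IntegrableOn.congr_fun this _ measurableSet_Ioi
    intro s _; exact mul_comm _ _
  · refine (ae_restrict_iff' measurableSet_Ioi).mpr (ae_of_all _ fun s hs => ?_)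
    have : Continuous fun x : ℝ => -s - x ^ 2 / (4*s) := by fun_prop
    exact continuous_const.mul (this.rexp)

lemma hasDerivAt_A (μ : ℝ) {y : ℝ} (hy : 0 < y) :
    HasDerivAt (Aint μ)
      (∫ s in Ioi (0:ℝ), s ^ (μ-1) * (Real.exp (-s - y ^ 2 / (4*s)) * (-(2*y/(4*s))))) y := by
  have hd := hasDerivAt_integral_of_dominated_loc_of_deriv_le (μ := volume.restrict (Ioi 0))
    (F := fun x s => s ^ (μ-1) * Real.exp (-s - x ^ 2 / (4*s)))
    (F' := fun x s => s ^ (μ-1) * (Real.exp (-s - x ^ 2 / (4*s)) * (-(2*x/(4*s)))))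
    (x₀ := y) (s := Metric.ball y (y/2))
    (bound := fun s => (3*y/4) * (s ^ (μ-2) * Real.exp (-s - (y^2/16) / s)))
    (Metric.ball_mem_nhds y (half_pos hy)) ?_ ?_ ?_ ?_ ?_ ?_
  · exact hd.2
  · filter_upwards with x
    apply Measurable.aestronglyMeasurable; fun_prop
  · exact integrable_A μ hy.ne'
  · apply Measurable.aestronglyMeasurable; fun_prop
  · -- bound
    refine (ae_restrict_iff' measurableSet_Ioi).mpr (ae_of_all _ fun s hs => ?_)
    intro x hx
    rw [mem_Ioi] at hs
    rw [Metric.mem_ball, Real.dist_eq, abs_lt] at hx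
    have hx1 : y/2 < x := by cases hx; linarith
    have hx2 : x < 3*(y/2) := by cases hx; linarith
    have hx0 : 0 < x := lt_trans (half_pos hy) hx1
    have h1 : (0:ℝ) < s ^ (μ-1) := Real.rpow_pos_of_pos hs _
    have h2 : (0:ℝ) < s ^ (μ-2) := Real.rpow_pos_of_pos hs _
    have e1 : Real.exp (-s - x ^ 2 / (4*s)) ≤ Real.exp (-s - (y^2/16)/s) := by
      apply Real.exp_le_exp.mpr
      have h3 : y^2/16/s ≤ x^2/(4*s) := by
        rw [div_le_div_iff₀ (by positivity) (by positivity)]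
        nlinarith [mul_nonneg (mul_nonneg (sub_nonneg.mpr hx1.le)
          (by linarith : (0:ℝ) ≤ x + y/2)) hs.le]
      linarith
    have hpow : s ^ (μ-1) = s ^ (μ-2) * s := by
      rw [show μ-1 = (μ-2)+1 by ring, Real.rpow_add hs, Real.rpow_one]
    rw [Real.norm_eq_abs, abs_mul, abs_of_nonneg h1.le, abs_mul, abs_neg,
      abs_of_nonneg (Real.exp_pos _).le,
      abs_of_nonneg (by positivity : (0:ℝ) ≤ 2*x/(4*s))]
    calc s ^ (μ-1) * (Real.exp (-s - x ^ 2 / (4*s)) * (2*x/(4*s)))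
        = s ^ (μ-2) * (Real.exp (-s - x ^ 2 / (4*s)) * (x/2)) := by
          rw [hpow]; field_simp; ring
      _ ≤ s ^ (μ-2) * (Real.exp (-s - (y^2/16)/s) * (3*y/4)) := by
          apply mul_le_mul_of_nonneg_left _ h2.le
          apply mul_le_mul e1 (by linarith) (by linarith) (Real.exp_pos _).le
      _ = (3*y/4) * (s ^ (μ-2) * Real.exp (-s - (y^2/16)/s)) := by ring
  · -- integrable bound
    exact (integrable_aux' (μ-2) (c := y^2/16) (by positivity)).const_mul _
  · -- differentiability
    refine (ae_restrict_iff' measurableSet_Ioi).mpr (ae_of_all _ fun s hs => ?_)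
    intro x _
    rw [mem_Ioi] at hs
    have h1 : HasDerivAt (fun x : ℝ => -s - x ^ 2 / (4*s)) (-(2*x/(4*s))) x := by
      have h2 : HasDerivAt (fun x : ℝ => x ^ 2) (2*x) x := by
        simpa using hasDerivAt_pow 2 x
      simpa using (h2.div_const (4*s)).const_sub (-s)
    exact (h1.exp.const_mul _)


/-- The integrand appearing in `(e^y A(y))' / e^y`. -/
noncomputable def Gfun (μ y s : ℝ) : ℝ :=
  s ^ (μ-1) * Real.exp (-s - y^2/(4*s)) + s ^ (μ-1) * (Real.exp (-s - y^2/(4*s)) * (-(2*y/(4*s))))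

lemma pointwise_key {μ y t : ℝ} (hμ : 1/2 ≤ μ) (hy : 0 < y) (ht : y/2 < t) :
    0 ≤ |y^2/4 * (-(t^2)⁻¹)| * Gfun μ y (y^2/(4*t)) + Gfun μ y t := by
  have ht0 : 0 < t := lt_trans (half_pos hy) ht
  set s : ℝ := y^2/(4*t) with hsdef
  have hs0 : 0 < s := by rw [hsdef]; positivity
  have hyst : y^2/(4*s) = t := by rw [hsdef]; field_simp
  have habs : |y^2/4 * (-(t^2)⁻¹)| = y^2/4 * (t^2)⁻¹ := by
    rw [abs_mul, abs_neg, abs_inv, abs_of_nonneg (by positivity : (0:ℝ) ≤ y^2/4),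
      abs_of_nonneg (sq_nonneg t)]
  have hE1 : (-s - y^2/(4*s)) = -t - s := by rw [hyst]; ring
  have h6 : 2*y/(4*s) = 2*t/y := by rw [hsdef]; field_simp
  have hS : (0:ℝ) < s ^ (μ-1) := Real.rpow_pos_of_pos hs0 _
  have hT : (0:ℝ) < t ^ (μ-1) := Real.rpow_pos_of_pos ht0 _
  have hE : (0:ℝ) < Real.exp (-t - s) := Real.exp_pos _
  have key : s ^ (μ-1) ≤ (2*t/y) * t ^ (μ-1) := by
    have ha0 : (0:ℝ) < y/(2*t) := by positivity
    have ha1 : y/(2*t) ≤ 1 := by rw [div_le_one (by positivity)]; linarith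
    have hsat : s = (y/(2*t))^2 * t := by rw [hsdef]; field_simp; ring
    calc s ^ (μ-1) = ((y/(2*t))^2 : ℝ) ^ (μ-1) * t ^ (μ-1) := by
          rw [hsat, Real.mul_rpow (by positivity) ht0.le]
      _ ≤ (2*t/y) * t ^ (μ-1) := by
          apply mul_le_mul_of_nonneg_right _ hT.le
          have h4 : ((y/(2*t))^2 : ℝ) ^ (μ-1) = (y/(2*t)) ^ (2*(μ-1)) := by
            rw [← Real.rpow_natCast (y/(2*t)) 2, ← Real.rpow_mul ha0.le]
            norm_num
          rw [h4]
          have h5 : (y/(2*t)) ^ (2*(μ-1)) ≤ (y/(2*t)) ^ (-1 : ℝ) :=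
            Real.rpow_le_rpow_of_exponent_ge ha0 ha1 (by linarith)
          rwa [Real.rpow_neg_one, inv_div] at h5
  rw [habs]
  unfold Gfun
  rw [hE1, ← hsdef, h6]
  have hfac : y^2/4 * (t^2)⁻¹ * (s ^ (μ-1) * Real.exp (-t-s)
        + s ^ (μ-1) * (Real.exp (-t-s) * (-(2*t/y))))
      + (t ^ (μ-1) * Real.exp (-t - y^2/(4*t))
        + t ^ (μ-1) * (Real.exp (-t - y^2/(4*t)) * (-(2*y/(4*t)))))
      = Real.exp (-t-s) * ((y^2/4 * (t^2)⁻¹ * (1 - 2*t/y)) * s ^ (μ-1)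
          + (1 - 2*y/(4*t)) * t ^ (μ-1)) := by
    rw [show (-t - y^2/(4*t)) = -t - s by rw [← hsdef]]
    ring
  rw [show (-t - y^2/(4*t)) = -t - s by rw [← hsdef]] at hfac ⊢
  rw [hfac]
  apply mul_nonneg hE.le
  have hneg : y^2/4 * (t^2)⁻¹ * (1 - 2*t/y) ≤ 0 := by
    apply mul_nonpos_of_nonneg_of_nonpos (by positivity)
    rw [sub_nonpos, le_div_iff₀ hy]; linarith
  have hstep := mul_le_mul_of_nonpos_left key hneg
  have hid : (y^2/4 * (t^2)⁻¹ * (1 - 2*t/y)) * (2*t/y) + (1 - 2*y/(4*t)) = 0 := by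
    field_simp
    ring
  nlinarith [mul_le_mul_of_nonneg_right (le_of_eq hid) hT.le, hstep]

lemma key_nonneg (μ : ℝ) (hμ : 1/2 ≤ μ) {y : ℝ} (hy : 0 < y) :
    0 ≤ Aint μ y + ∫ s in Ioi (0:ℝ),
      s ^ (μ-1) * (Real.exp (-s - y^2/(4*s)) * (-(2*y/(4*s)))) := by
  have hint1 := integrable_A μ hy.ne'
  have hint2 := integrable_A' μ hy.ne'
  have hsum : Aint μ y + (∫ s in Ioi (0:ℝ),
        s ^ (μ-1) * (Real.exp (-s - y^2/(4*s)) * (-(2*y/(4*s)))))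
      = ∫ s in Ioi (0:ℝ), Gfun μ y s := (integral_add hint1 hint2).symm
  rw [hsum]
  have hGint : IntegrableOn (Gfun μ y) (Ioi 0) := hint1.add hint2
  -- change of variables on (0, y/2)
  have himg : (fun t : ℝ => y^2/(4*t)) '' Ioi (y/2) = Ioo 0 (y/2) := by
    ext u
    simp only [mem_image, mem_Ioi, mem_Ioo]
    constructor
    · rintro ⟨t, ht, rfl⟩
      have ht0 : 0 < t := lt_trans (half_pos hy) ht
      refine ⟨by positivity, ?_⟩
      rw [div_lt_iff₀ (by positivity)]
      nlinarith
    · rintro ⟨hu0, hu2⟩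
      refine ⟨y^2/(4*u), ?_, by field_simp⟩
      rw [lt_div_iff₀ (by positivity)]
      nlinarith
  have hderiv : ∀ t ∈ Ioi (y/2), HasDerivWithinAt (fun t : ℝ => y^2/(4*t))
      (y^2/4 * (-(t^2)⁻¹)) (Ioi (y/2)) t := by
    intro t ht
    rw [mem_Ioi] at ht
    have ht0 : 0 < t := lt_trans (half_pos hy) ht
    have h0 : (fun t : ℝ => y^2/(4*t)) = fun t => (y^2/4) * t⁻¹ := by
      funext u
      rw [div_eq_mul_inv, div_eq_mul_inv, mul_inv]
      ring
    rw [h0]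
    exact ((hasDerivAt_inv ht0.ne').const_mul (y^2/4)).hasDerivWithinAt
  have hinj : InjOn (fun t : ℝ => y^2/(4*t)) (Ioi (y/2)) := by
    intro a ha b hb hab
    rw [mem_Ioi] at ha hb
    have ha0 : (0:ℝ) < a := lt_trans (half_pos hy) ha
    have hb0 : (0:ℝ) < b := lt_trans (half_pos hy) hb
    have hy2 : (0:ℝ) < y^2 := by positivity
    simp only at hab
    rw [div_eq_div_iff (by positivity) (by positivity)] at hab
    nlinarith
  have h1 : ∫ u in Ioo (0:ℝ) (y/2), Gfun μ y u
      = ∫ t in Ioi (y/2), |y^2/4 * (-(t^2)⁻¹)| • Gfun μ y (y^2/(4*t)) := by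
    rw [← himg, integral_image_eq_integral_abs_deriv_smul measurableSet_Ioi hderiv hinj]
  have hIntH : IntegrableOn (fun t => |y^2/4 * (-(t^2)⁻¹)| • Gfun μ y (y^2/(4*t)))
      (Ioi (y/2)) := by
    rw [← integrableOn_image_iff_integrableOn_abs_deriv_smul measurableSet_Ioi hderiv hinj,
      himg]
    exact hGint.mono_set Ioo_subset_Ioi_self
  have hsplit : ∫ s in Ioi (0:ℝ), Gfun μ y s
      = (∫ u in Ioo (0:ℝ) (y/2), Gfun μ y u) + ∫ t in Ici (y/2), Gfun μ y t := by
    rw [← setIntegral_union ((Iio_disjoint_Ici (le_refl (y/2))).mono_left Ioo_subset_Iio_self)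
      measurableSet_Ici (hGint.mono_set Ioo_subset_Ioi_self)
      (hGint.mono_set fun u hu => lt_of_lt_of_le (half_pos hy) hu),
      Ioo_union_Ici_eq_Ioi (half_pos hy)]
  rw [hsplit, h1, integral_Ici_eq_integral_Ioi,
    ← integral_add hIntH (hGint.mono_set fun u hu => lt_trans (half_pos hy) hu)]
  apply setIntegral_nonneg measurableSet_Ioi
  intro t ht
  rw [mem_Ioi] at ht
  have := pointwise_key hμ hy ht
  simpa [smul_eq_mul] using this

lemma Aint_zero (μ : ℝ) (hμ : 0 < μ) : Aint μ 0 = Real.Gamma μ := by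
  rw [Real.Gamma_eq_integral hμ]
  apply setIntegral_congr_fun measurableSet_Ioi
  intro u hu
  norm_num [mul_comm]

lemma Aint_ge (μ : ℝ) (hμhalf : 1/2 ≤ μ) {x : ℝ} (hx : 0 < x) :
    Real.Gamma μ * Real.exp (-x) ≤ Aint μ x := by
  have hμ : 0 < μ := by linarith
  have hmono : MonotoneOn (fun y => Real.exp y * Aint μ y) (Icc 0 x) := by
    apply monotoneOn_of_deriv_nonneg (convex_Icc 0 x)
    · exact (Real.continuous_exp.mul (continuous_A μ hμ)).continuousOn
    · rw [interior_Icc]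
      intro z hz
      exact ((Real.hasDerivAt_exp z).mul (hasDerivAt_A μ hz.1)).differentiableAt.differentiableWithinAt
    · rw [interior_Icc]
      intro z hz
      have hd := (Real.hasDerivAt_exp z).mul (hasDerivAt_A μ hz.1)
      rw [show (fun y => Real.exp y * Aint μ y) = Real.exp * Aint μ from rfl, hd.deriv]
      have hk := key_nonneg μ hμhalf hz.1
      nlinarith [Real.exp_pos z, mul_nonneg (Real.exp_pos z).le hk]
  have h2 := hmono ⟨le_refl (0:ℝ), hx.le⟩ ⟨hx.le, le_refl x⟩ hx.le
  simp only [Real.exp_zero, one_mul] at h2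
  rw [Aint_zero μ hμ] at h2
  calc Real.Gamma μ * Real.exp (-x) ≤ (Real.exp x * Aint μ x) * Real.exp (-x) :=
        mul_le_mul_of_nonneg_right h2 (Real.exp_pos _).le
    _ = Aint μ x := by
        rw [Real.exp_neg]
        field_simp


lemma besselK_eq (μ x : ℝ) (hx : 0 < x) :
    besselK μ x = 1/2 * ((2/x) ^ μ * Aint μ x) := by
  have h2x : (0:ℝ) < 2/x := by positivity
  set g : ℝ → ℝ := fun u =>
    u⁻¹ * (Real.exp (-(x * ((u + u⁻¹)/2))) * Real.cosh (μ * Real.log u)) with hg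
  set Phi : ℝ → ℝ := fun u => u ^ (μ-1) * Real.exp (-((x/2)*u) - (x/2)/u) with hPhi
  set Psi : ℝ → ℝ := fun u => u ^ (-μ-1) * Real.exp (-((x/2)*u) - (x/2)/u) with hPsi
  have hPhiint : IntegrableOn Phi (Ioi 0) := integrable_aux (μ-1) (half_pos hx) (half_pos hx)
  have hPsiint : IntegrableOn Psi (Ioi 0) := integrable_aux (-μ-1) (half_pos hx) (half_pos hx)
  have himg1 : Real.exp '' Ioi (0:ℝ) = Ioi 1 := by
    ext u
    simp only [mem_image, mem_Ioi]
    constructor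
    · rintro ⟨t, ht, rfl⟩
      rw [← Real.exp_zero]
      exact Real.exp_lt_exp.mpr ht
    · intro hu
      exact ⟨Real.log u, Real.log_pos hu, Real.exp_log (by linarith)⟩
  have h2 : ∫ u in Ioi (1:ℝ), g u = ∫ t in Ioi (0:ℝ), |Real.exp t| • g (Real.exp t) := by
    rw [← himg1]
    exact integral_image_eq_integral_abs_deriv_smul measurableSet_Ioi
      (fun t _ => (Real.hasDerivAt_exp t).hasDerivWithinAt) Real.exp_injective.injOn g
  have h3 : ∀ t : ℝ, |Real.exp t| • g (Real.exp t)
      = Real.exp (-(x * Real.cosh t)) * Real.cosh (μ * t) := by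
    intro t
    rw [smul_eq_mul, hg]
    simp only
    rw [abs_of_nonneg (Real.exp_pos t).le, Real.log_exp, ← Real.exp_neg t, ← Real.cosh_eq t,
      ← mul_assoc, ← Real.exp_add]
    simp
  have hbk : besselK μ x = ∫ u in Ioi (1:ℝ), g u := by
    rw [besselK, h2]
    exact (setIntegral_congr_fun measurableSet_Ioi (fun t _ => h3 t)).symm
  have hgeq : ∀ u ∈ Ioi (1:ℝ), g u = 1/2 * (Phi u + Psi u) := by
    intro u hu
    rw [mem_Ioi] at hu
    have hu0 : (0:ℝ) < u := lt_trans one_pos hu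
    rw [hg, hPhi, hPsi]
    simp only
    have e1 : Real.exp (μ * Real.log u) = u ^ μ := by
      rw [Real.rpow_def_of_pos hu0, mul_comm]
    have e2 : Real.exp (-(μ * Real.log u)) = u ^ (-μ) := by
      rw [Real.rpow_def_of_pos hu0]
      congr 1
      ring
    have hcosh : Real.cosh (μ * Real.log u) = (u ^ μ + u ^ (-μ))/2 := by
      rw [Real.cosh_eq, e1, e2]
    have hexp : -(x * ((u + u⁻¹)/2)) = -((x/2)*u) - (x/2)/u := by
      field_simp
      ring
    have hr1 : u ^ (μ-1) = u ^ μ * u⁻¹ := by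
      rw [Real.rpow_sub hu0, Real.rpow_one, div_eq_mul_inv]
    have hr2 : u ^ (-μ-1) = u ^ (-μ) * u⁻¹ := by
      rw [show -μ-1 = (-μ) - 1 by ring, Real.rpow_sub hu0, Real.rpow_one, div_eq_mul_inv]
    rw [hcosh, hexp, hr1, hr2]
    ring
  have hI1 : Ioi (1:ℝ) ⊆ Ioi (0:ℝ) := Ioi_subset_Ioi (by norm_num)
  have hint3 : besselK μ x = 1/2 * ((∫ u in Ioi (1:ℝ), Phi u) + ∫ u in Ioi (1:ℝ), Psi u) := by
    rw [hbk, setIntegral_congr_fun measurableSet_Ioi hgeq, integral_const_mul,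
      integral_add (hPhiint.mono_set hI1) (hPsiint.mono_set hI1)]
  have himg2 : (fun v : ℝ => v⁻¹) '' Ioo (0:ℝ) 1 = Ioi 1 := by
    ext u
    simp only [mem_image, mem_Ioo, mem_Ioi]
    constructor
    · rintro ⟨v, ⟨hv0, hv1⟩, rfl⟩
      rw [lt_inv_comm₀ one_pos hv0]
      simpa using hv1
    · intro hu
      have hu0 : (0:ℝ) < u := lt_trans one_pos hu
      refine ⟨u⁻¹, ⟨inv_pos.mpr hu0, ?_⟩, inv_inv u⟩
      rw [inv_lt_comm₀ hu0 one_pos]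
      simpa using hu
  have hrefl : ∫ u in Ioi (1:ℝ), Psi u = ∫ v in Ioo (0:ℝ) 1, Phi v := by
    rw [← himg2, integral_image_eq_integral_abs_deriv_smul measurableSet_Ioo
      (fun v hv => (hasDerivAt_inv (ne_of_gt hv.1)).hasDerivWithinAt)
      (fun a _ b _ hab => inv_injective hab) Psi]
    apply setIntegral_congr_fun measurableSet_Ioo
    intro v hv
    obtain ⟨hv0, hv1⟩ := hv
    simp only [smul_eq_mul, abs_neg, abs_inv]
    rw [abs_of_nonneg (sq_nonneg v), hPsi, hPhi]
    simp only
    have e1 : (v⁻¹) ^ (-μ-1) = v ^ (μ+1) := by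
      rw [Real.inv_rpow hv0.le, ← Real.rpow_neg hv0.le]
      congr 1
      ring
    have e2 : -((x/2)*v⁻¹) - (x/2)/v⁻¹ = -((x/2)*v) - (x/2)/v := by
      rw [div_inv_eq_mul, div_eq_mul_inv]
      ring
    rw [e1, e2]
    have e3 : (v^2)⁻¹ * v ^ (μ+1) = v ^ (μ-1) := by
      have e4 : v ^ (μ+1) = v ^ (μ-1) * v^2 := by
        rw [show μ+1 = (μ-1)+2 by ring, Real.rpow_add hv0]
        congr 1
        rw [← Real.rpow_natCast v 2]
        norm_num
      rw [e4]
      field_simp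
    rw [← mul_assoc, e3]
  have hunion : (∫ v in Ioo (0:ℝ) 1, Phi v) + (∫ u in Ioi (1:ℝ), Phi u)
      = ∫ u in Ioi (0:ℝ), Phi u := by
    rw [← integral_Ici_eq_integral_Ioi,
      ← setIntegral_union ((Iio_disjoint_Ici (le_refl (1:ℝ))).mono_left Ioo_subset_Iio_self)
        measurableSet_Ici (hPhiint.mono_set Ioo_subset_Ioi_self)
        (hPhiint.mono_set fun u hu => mem_Ioi.mpr (lt_of_lt_of_le one_pos hu)),
      Ioo_union_Ici_eq_Ioi one_pos]
  have hscale : ∫ u in Ioi (0:ℝ), Phi u = (2/x) * ((2/x)^(μ-1) * Aint μ x) := by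
    have h := integral_comp_mul_left_Ioi Phi 0 h2x
    simp only [mul_zero, smul_eq_mul] at h
    have hid : ∫ v in Ioi (0:ℝ), Phi ((2/x)*v) = (2/x)^(μ-1) * Aint μ x := by
      rw [Aint, ← integral_const_mul]
      apply setIntegral_congr_fun measurableSet_Ioi
      intro u hu
      rw [mem_Ioi] at hu
      rw [hPhi]
      simp only
      have e1 : ((2/x)*u) ^ (μ-1) = (2/x)^(μ-1) * u^(μ-1) := Real.mul_rpow h2x.le hu.le
      have e2 : -((x/2)*((2/x)*u)) - (x/2)/((2/x)*u) = -u - x^2/(4*u) := by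
        field_simp
        ring
      rw [e1, e2]
      ring
    rw [hid] at h
    calc ∫ u in Ioi (0:ℝ), Phi u = (2/x) * ((2/x)⁻¹ * ∫ u in Ioi (0:ℝ), Phi u) := by
          field_simp
      _ = (2/x) * ((2/x)^(μ-1) * Aint μ x) := by rw [← h]
  have hpow : (2/x) * (2/x)^(μ-1) = (2/x)^μ := by
    have h := Real.rpow_add h2x 1 (μ-1)
    rw [show (1:ℝ)+(μ-1) = μ by ring, Real.rpow_one] at h
    exact h.symm
  rw [hint3, hrefl, add_comm (∫ u in Ioi (1:ℝ), Phi u) (∫ v in Ioo (0:ℝ) 1, Phi v),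
    hunion, hscale, ← mul_assoc ((2:ℝ)/x), hpow]

end BesselKProof

/-- Lemma 2.5, inequality (2.4): lower bound for the Macdonald function. -/
theorem besselK_lower_bound (μ x : ℝ) (hμ : 1 / 2 ≤ μ) (hx : 0 < x) :
    besselK μ x ≥ 2 ^ (μ - 1) / x ^ μ * Real.Gamma μ * Real.exp (-x) := by
  have hK := BesselKProof.besselK_eq μ x hx
  have hA := BesselKProof.Aint_ge μ hμ hx
  rw [ge_iff_le, hK]
  have h2x : (0:ℝ) < (2/x) ^ μ := Real.rpow_pos_of_pos (by positivity) μ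
  have hid : (2:ℝ) ^ (μ-1) / x ^ μ = 1/2 * (2/x) ^ μ := by
    rw [Real.div_rpow (by norm_num) hx.le, Real.rpow_sub (by norm_num : (0:ℝ) < 2),
      Real.rpow_one]
    ring
  calc 2 ^ (μ-1) / x ^ μ * Real.Gamma μ * Real.exp (-x)
      = 1/2 * ((2/x) ^ μ * (Real.Gamma μ * Real.exp (-x))) := by rw [hid]; ring
    _ ≤ 1/2 * ((2/x) ^ μ * BesselKProof.Aint μ x) :=
        mul_le_mul_of_nonneg_left (mul_le_mul_of_nonneg_left hA h2x.le) (by norm_num)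
end

section
/- For every μ ≥ 1/2 and every x > 0, ∫_0^∞ e^{−y} y^{μ−1/2} (1 + y/(2x))^{μ−1/2} dy ≤ 4 (1 + 1/(2x))^{μ−1/2} Γ(2μ). -/
open MeasureTheory ProbabilityTheory Real Filter Set
open scoped ENNReal NNReal Topology

lemma shift_integral_aux (h : ℝ → ℝ) :
    ∫ y in Set.Ioi (0:ℝ), h (y + 1) = ∫ u in Set.Ioi (1:ℝ), h u := by
  have hmp : MeasurePreserving (· + (1:ℝ)) volume volume :=
    measurePreserving_add_right volume 1
  have hemb : MeasurableEmbedding (· + (1:ℝ)) :=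
    (Homeomorph.addRight (1:ℝ)).isClosedEmbedding.measurableEmbedding
  have hpre : ((· + (1:ℝ)) ⁻¹' Set.Ioi 1) = Set.Ioi 0 := by
    ext y; simp [Set.mem_preimage, lt_add_iff_pos_left]
  have := hmp.setIntegral_preimage_emb hemb h (Set.Ioi 1)
  rwa [hpre] at this

/-- Inequality (2.6). -/
theorem integral_bound_26 (μ x : ℝ) (hμ : 1 / 2 ≤ μ) (hx : 0 < x) :
    (∫ y in Set.Ioi (0 : ℝ), Real.exp (-y) * y ^ (μ - 1 / 2) * (1 + y / (2 * x)) ^ (μ - 1 / 2))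
      ≤ 4 * (1 + 1 / (2 * x)) ^ (μ - 1 / 2) * Real.Gamma (2 * μ) := by
  
  set p := μ - 1/2 with hpdef
  have hp : 0 ≤ p := by simp [hpdef]; linarith
  have hc : 0 < 1 / (2 * x) := by positivity
  set c := 1 / (2 * x) with hcdef
  set C := (1 + c) ^ p with hCdef
  have hC : 0 < C := Real.rpow_pos_of_pos (by linarith) p
  have h2μ : 0 < 2 * μ := by linarith
  -- Gamma integrand integrable
  have hΓint : MeasureTheory.IntegrableOn (fun u : ℝ => Real.exp (-u) * u ^ (2*μ - 1))
      (Set.Ioi 0) := by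
    simpa using Real.GammaIntegral_convergent h2μ
  set g : ℝ → ℝ := fun y => Real.exp (-y) * (1 + y) ^ (2*μ - 1) with hgdef
  set h : ℝ → ℝ := fun u => Real.exp 1 * (Real.exp (-u) * u ^ (2*μ - 1)) with hhdef
  have hgh : ∀ y : ℝ, g y = h (y + 1) := by
    intro y
    simp only [hgdef, hhdef]
    rw [show -(y+1) = 1 + -y - 2 by ring]
    rw [← mul_assoc, ← Real.exp_add]
    ring_nf
  have hInt_h : MeasureTheory.IntegrableOn h (Set.Ioi 1) :=
    ((hΓint.mono_set (Set.Ioi_subset_Ioi zero_le_one)).const_mul _)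
  have hshift : ∫ y in Set.Ioi (0:ℝ), g y = ∫ u in Set.Ioi (1:ℝ), h u := by
    simp_rw [hgh]; exact shift_integral_aux h
  have hInt_g : MeasureTheory.IntegrableOn g (Set.Ioi 0) := by
    have hmp : MeasurePreserving (· + (1:ℝ)) (volume.restrict (Set.Ioi 0))
        (volume.restrict (Set.Ioi 1)) := by
      have hpre : ((· + (1:ℝ)) ⁻¹' Set.Ioi 1) = Set.Ioi 0 := by
        ext y; simp [Set.mem_preimage, lt_add_iff_pos_left]
      have := (measurePreserving_add_right volume (1:ℝ)).restrict_preimage_emb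
        ((Homeomorph.addRight (1:ℝ)).isClosedEmbedding.measurableEmbedding) (Set.Ioi 1)
      rwa [hpre] at this
    have := hmp.integrable_comp_emb
      ((Homeomorph.addRight (1:ℝ)).isClosedEmbedding.measurableEmbedding) (g := h)
    rw [MeasureTheory.IntegrableOn]
    have : MeasureTheory.Integrable (h ∘ (· + (1:ℝ))) (volume.restrict (Set.Ioi 0)) :=
      this.mpr hInt_h
    refine this.congr (Filter.Eventually.of_forall fun y => ?_)
    exact (hgh y).symm
  -- pointwise bound
  have hptwise : ∀ y ∈ Set.Ioi (0:ℝ),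
      Real.exp (-y) * y ^ p * (1 + y / (2 * x)) ^ p ≤ C * g y := by
    intro y hy
    rw [Set.mem_Ioi] at hy
    have h1 : y ^ p * (1 + y / (2 * x)) ^ p = (y * (1 + y * c)) ^ p := by
      rw [Real.mul_rpow hy.le (by positivity)]
      rw [hcdef]; ring_nf
    have h2 : y * (1 + y * c) ≤ (1 + c) * (1 + y) ^ 2 := by nlinarith
    have h3 : (y * (1 + y * c)) ^ p ≤ ((1 + c) * (1 + y) ^ 2) ^ p :=
      Real.rpow_le_rpow (by positivity) h2 hp
    have h4 : ((1 + c) * (1 + y) ^ 2) ^ p = C * (1 + y) ^ (2*μ - 1) := by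
      rw [Real.mul_rpow (by linarith) (by positivity), hCdef]
      congr 1
      rw [← Real.rpow_natCast (1 + y) 2, ← Real.rpow_mul (by linarith)]
      congr 1
      push_cast
      rw [hpdef]; ring
    calc Real.exp (-y) * y ^ p * (1 + y / (2 * x)) ^ p
        = Real.exp (-y) * (y ^ p * (1 + y / (2 * x)) ^ p) := by ring
      _ ≤ Real.exp (-y) * (C * (1 + y) ^ (2*μ - 1)) := by
          rw [h1]
          exact mul_le_mul_of_nonneg_left (h4 ▸ h3) (Real.exp_pos _).le
      _ = C * g y := by rw [hgdef]; ring
  -- integrability of LHS integrand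
  have hInt_Cg : MeasureTheory.IntegrableOn (fun y => C * g y) (Set.Ioi 0) :=
    hInt_g.const_mul C
  have hmeas : MeasureTheory.AEStronglyMeasurable
      (fun y : ℝ => Real.exp (-y) * y ^ p * (1 + y / (2 * x)) ^ p)
      (volume.restrict (Set.Ioi 0)) := by
    apply Measurable.aestronglyMeasurable
    fun_prop
  have hInt_f : MeasureTheory.IntegrableOn
      (fun y : ℝ => Real.exp (-y) * y ^ p * (1 + y / (2 * x)) ^ p) (Set.Ioi 0) := by
    refine hInt_Cg.mono' hmeas ?_
    rw [MeasureTheory.ae_restrict_iff' measurableSet_Ioi]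
    refine Filter.Eventually.of_forall fun y hy => ?_
    rw [Set.mem_Ioi] at hy
    rw [Real.norm_eq_abs, abs_of_nonneg (by positivity)]
    exact hptwise y hy
  have hmono : (∫ y in Set.Ioi (0:ℝ),
        Real.exp (-y) * y ^ p * (1 + y / (2 * x)) ^ p)
      ≤ ∫ y in Set.Ioi (0:ℝ), C * g y :=
    MeasureTheory.setIntegral_mono_on hInt_f hInt_Cg measurableSet_Ioi hptwise
  have hCg : (∫ y in Set.Ioi (0:ℝ), C * g y) = C * ∫ y in Set.Ioi (0:ℝ), g y :=
    MeasureTheory.integral_const_mul C g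
  have hg_val : (∫ y in Set.Ioi (0:ℝ), g y)
      ≤ Real.exp 1 * Real.Gamma (2 * μ) := by
    rw [hshift]
    have : (∫ u in Set.Ioi (1:ℝ), h u)
        = Real.exp 1 * ∫ u in Set.Ioi (1:ℝ), Real.exp (-u) * u ^ (2*μ - 1) :=
      MeasureTheory.integral_const_mul _ _
    rw [this]
    have hsub : (∫ u in Set.Ioi (1:ℝ), Real.exp (-u) * u ^ (2*μ - 1))
        ≤ ∫ u in Set.Ioi (0:ℝ), Real.exp (-u) * u ^ (2*μ - 1) := by
      apply MeasureTheory.setIntegral_mono_set hΓint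
      · filter_upwards [MeasureTheory.ae_restrict_mem measurableSet_Ioi] with u hu
        rw [Set.mem_Ioi] at hu
        positivity
      · exact HasSubset.Subset.eventuallyLE (Set.Ioi_subset_Ioi zero_le_one)
    have hΓeq : Real.Gamma (2 * μ) = ∫ u in Set.Ioi (0:ℝ), Real.exp (-u) * u ^ (2*μ - 1) :=
      Real.Gamma_eq_integral h2μ
    rw [hΓeq]
    exact mul_le_mul_of_nonneg_left hsub (Real.exp_pos _).le
  have hΓpos : 0 < Real.Gamma (2 * μ) := Real.Gamma_pos_of_pos h2μ
  have he : Real.exp 1 ≤ 4 := by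
    have := Real.exp_one_lt_d9
    linarith
  calc (∫ y in Set.Ioi (0:ℝ), Real.exp (-y) * y ^ p * (1 + y / (2 * x)) ^ p)
      ≤ C * ∫ y in Set.Ioi (0:ℝ), g y := by rw [← hCg]; exact hmono
    _ ≤ C * (Real.exp 1 * Real.Gamma (2 * μ)) :=
        mul_le_mul_of_nonneg_left hg_val hC.le
    _ ≤ 4 * C * Real.Gamma (2 * μ) := by
        have hh := mul_le_mul_of_nonneg_right he (mul_pos hC hΓpos).le
        nlinarith [hh]
end

section
/- Let μ ≥ 0 be a real number. For every integer n ≥ 1, Γ(2μ+n)/Γ(μ+n)² ≤ (2^{μ−1} Γ(2μ+1)/Γ(μ+1)²) · 2^n/Γ(n). -/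
open MeasureTheory ProbabilityTheory Real Filter Set
open scoped ENNReal NNReal Topology

/-- Lemma 2.6: bound on a ratio of Gamma functions. -/
theorem gamma_ratio_bound (μ : ℝ) (hμ : 0 ≤ μ) (n : ℕ) (hn : 1 ≤ n) :
    Real.Gamma (2 * μ + n) / Real.Gamma (μ + n) ^ 2
      ≤ 2 ^ (μ - 1) * Real.Gamma (2 * μ + 1) / Real.Gamma (μ + 1) ^ 2
        * ((2 : ℝ) ^ n / Real.Gamma n) := by
  induction n, hn using Nat.le_induction with
  | base =>
    push_cast
    rw [Real.Gamma_one]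
    have hG2 : 0 < Real.Gamma (2 * μ + 1) := Real.Gamma_pos_of_pos (by linarith)
    have hG1 : 0 < Real.Gamma (μ + 1) := Real.Gamma_pos_of_pos (by linarith)
    have key : (1 : ℝ) ≤ 2 ^ (μ - 1) * 2 := by
      have h1 : (2 : ℝ) ^ (μ - 1) * 2 = 2 ^ μ := by
        rw [Real.rpow_sub (by norm_num), Real.rpow_one]
        field_simp
      rw [h1]
      calc (1 : ℝ) = 2 ^ (0 : ℝ) := (Real.rpow_zero 2).symm
        _ ≤ 2 ^ μ := Real.rpow_le_rpow_of_exponent_le (by norm_num) hμ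
    have hR : 0 ≤ Real.Gamma (2 * μ + 1) / Real.Gamma (μ + 1) ^ 2 := by positivity
    have heq : 2 ^ (μ - 1) * Real.Gamma (2 * μ + 1) / Real.Gamma (μ + 1) ^ 2 * (2 ^ 1 / 1)
        = (2 ^ (μ - 1) * 2) * (Real.Gamma (2 * μ + 1) / Real.Gamma (μ + 1) ^ 2) := by
      ring
    rw [heq]
    nlinarith [hR, key]
  | succ n hn1 ih =>
    have hn : (1 : ℝ) ≤ (n : ℝ) := by exact_mod_cast hn1
    have hG2 : 0 < Real.Gamma (2 * μ + n) := Real.Gamma_pos_of_pos (by linarith)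
    have hG1 : 0 < Real.Gamma (μ + n) := Real.Gamma_pos_of_pos (by linarith)
    have hGn : 0 < Real.Gamma n := Real.Gamma_pos_of_pos (by linarith)
    have hC : 0 ≤ (2 : ℝ) ^ (μ - 1) * Real.Gamma (2 * μ + 1) / Real.Gamma (μ + 1) ^ 2 := by
      have := Real.Gamma_pos_of_pos (show (0:ℝ) < 2 * μ + 1 by linarith)
      have := Real.Gamma_pos_of_pos (show (0:ℝ) < μ + 1 by linarith)
      positivity
    push_cast
    have e1 : Real.Gamma (2 * μ + ((n : ℝ) + 1)) = (2 * μ + n) * Real.Gamma (2 * μ + n) := by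
      rw [show 2 * μ + ((n : ℝ) + 1) = (2 * μ + n) + 1 by ring,
        Real.Gamma_add_one (by linarith)]
    have e2 : Real.Gamma (μ + ((n : ℝ) + 1)) = (μ + n) * Real.Gamma (μ + n) := by
      rw [show μ + ((n : ℝ) + 1) = (μ + n) + 1 by ring, Real.Gamma_add_one (by linarith)]
    have e3 : Real.Gamma ((n : ℝ) + 1) = n * Real.Gamma n := by
      rw [Real.Gamma_add_one (by linarith)]
    rw [e1, e2, e3]
    have hratio : (2 * μ + n) / (μ + n) ^ 2 ≤ 2 / n := by
      rw [div_le_div_iff₀ (by positivity) (by linarith)]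
      nlinarith
    calc (2 * μ + n) * Real.Gamma (2 * μ + n) / ((μ + n) * Real.Gamma (μ + n)) ^ 2
        = (2 * μ + n) / (μ + n) ^ 2 * (Real.Gamma (2 * μ + n) / Real.Gamma (μ + n) ^ 2) := by
          rw [mul_pow, mul_div_mul_comm]
      _ ≤ (2 * μ + n) / (μ + n) ^ 2
            * (2 ^ (μ - 1) * Real.Gamma (2 * μ + 1) / Real.Gamma (μ + 1) ^ 2
              * ((2 : ℝ) ^ n / Real.Gamma n)) :=
          mul_le_mul_of_nonneg_left ih (by positivity)
      _ ≤ (2 / n)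
            * (2 ^ (μ - 1) * Real.Gamma (2 * μ + 1) / Real.Gamma (μ + 1) ^ 2
              * ((2 : ℝ) ^ n / Real.Gamma n)) :=
          mul_le_mul_of_nonneg_right hratio (by positivity)
      _ = 2 ^ (μ - 1) * Real.Gamma (2 * μ + 1) / Real.Gamma (μ + 1) ^ 2
            * ((2 : ℝ) ^ (n + 1) / ((n : ℝ) * Real.Gamma n)) := by
          rw [pow_succ]
          field_simp
          ring
end

section
/- For every μ ≥ 1/2 and every x > 0, the ratio of Macdonald functions satisfies K_{μ+1}(x)/K_μ(x) ≤ 8 (2x+1)^{μ+1} μ / x. -/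
open MeasureTheory ProbabilityTheory Real Filter Set
open scoped ENNReal NNReal Topology

private lemma coshq_aux {t : ℝ} (ht : 0 ≤ t) : t ^ 2 / 8 ≤ Real.cosh t := by
  have h1 : t / 2 + 1 ≤ Real.exp (t / 2) := Real.add_one_le_exp (t / 2)
  have h2 : Real.exp t = Real.exp (t / 2) * Real.exp (t / 2) := by
    rw [← Real.exp_add]; ring_nf
  rw [Real.cosh_eq]
  nlinarith [Real.exp_pos (-t), Real.exp_pos (t / 2)]

private lemma coshle_aux {u : ℝ} (hu : 0 ≤ u) : Real.cosh u ≤ Real.exp u := by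
  rw [Real.cosh_eq]
  have := Real.exp_le_exp.2 (neg_le_self hu)
  linarith

private lemma sinhle_aux {u : ℝ} (hu : 0 ≤ u) : |Real.sinh u| ≤ Real.exp u := by
  rw [abs_of_nonneg (Real.sinh_nonneg_iff.2 hu), Real.sinh_eq]
  have := Real.exp_pos (-u)
  have := Real.exp_pos u
  linarith

private lemma intAux_bessel {x a : ℝ} (hx : 0 < x) (f : ℝ → ℝ) (hf : Continuous f)
    (hbd : ∀ t, 0 < t → |f t| ≤ Real.exp (a * t)) :
    MeasureTheory.IntegrableOn (fun t => Real.exp (-(x * Real.cosh t)) * f t) (Set.Ioi 0) := by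
  set c := x / 8 with hc
  have hc0 : 0 < c := by rw [hc]; positivity
  have hdom : MeasureTheory.Integrable (fun t : ℝ =>
      Real.exp (a ^ 2 / (4 * c)) * Real.exp (-c * (t - a / (2 * c)) ^ 2)) := by
    exact ((integrable_exp_neg_mul_sq hc0).comp_sub_right (a / (2 * c))).const_mul _
  refine MeasureTheory.Integrable.mono' hdom.integrableOn
    (((Real.continuous_exp.comp
      (continuous_const.mul Real.continuous_cosh).neg).mul hf).aestronglyMeasurable.restrict) ?_
  filter_upwards [MeasureTheory.ae_restrict_mem measurableSet_Ioi] with t ht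
  have ht0 : (0 : ℝ) < t := ht
  have h1 : ‖Real.exp (-(x * Real.cosh t)) * f t‖
      ≤ Real.exp (-(x * Real.cosh t)) * Real.exp (a * t) := by
    rw [norm_mul, Real.norm_eq_abs, Real.norm_eq_abs, abs_of_pos (Real.exp_pos _)]
    exact mul_le_mul_of_nonneg_left (hbd t ht0) (Real.exp_pos _).le
  refine h1.trans ?_
  rw [← Real.exp_add, ← Real.exp_add]
  apply Real.exp_le_exp.2
  have hid : a ^ 2 / (4 * c) + -c * (t - a / (2 * c)) ^ 2 = a * t - c * t ^ 2 := by
    field_simp; ring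
  rw [hid]
  have h2 := mul_le_mul_of_nonneg_left (coshq_aux ht0.le) hx.le
  have h3 : c * t ^ 2 = x * (t ^ 2 / 8) := by rw [hc]; ring
  linarith

private lemma intK_bessel {x : ℝ} (hx : 0 < x) (a : ℝ) :
    MeasureTheory.IntegrableOn
      (fun t => Real.exp (-(x * Real.cosh t)) * Real.cosh (a * t)) (Set.Ioi 0) := by
  refine intAux_bessel (a := |a|) hx _
    (Real.continuous_cosh.comp (continuous_const.mul continuous_id)) ?_
  intro t ht
  rw [abs_of_pos (Real.cosh_pos _), ← Real.cosh_abs, abs_mul, abs_of_pos ht]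
  exact coshle_aux (by positivity)

private lemma intS_bessel {x μ : ℝ} (hx : 0 < x) (hμ : 0 ≤ μ) :
    MeasureTheory.IntegrableOn
      (fun t => Real.exp (-(x * Real.cosh t)) * (Real.sinh (μ * t) * Real.sinh t))
      (Set.Ioi 0) := by
  refine intAux_bessel (a := μ + 1) hx _ (by continuity) ?_
  intro t ht
  rw [abs_mul]
  calc |Real.sinh (μ * t)| * |Real.sinh t| ≤ Real.exp (μ * t) * Real.exp t :=
        mul_le_mul (sinhle_aux (mul_nonneg hμ ht.le)) (sinhle_aux ht.le)
          (abs_nonneg _) (Real.exp_pos _).le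
    _ = Real.exp ((μ + 1) * t) := by rw [← Real.exp_add]; ring_nf

private lemma besselK_pos_aux {μ x : ℝ} (hx : 0 < x) : 0 < besselK μ x := by
  rw [besselK]
  refine (MeasureTheory.setIntegral_pos_iff_support_of_nonneg_ae ?_ (intK_bessel hx μ)).2 ?_
  · exact Filter.Eventually.of_forall fun t => by positivity
  · have hsub : Set.Ioi (0 : ℝ) ⊆ Function.support
        (fun t => Real.exp (-(x * Real.cosh t)) * Real.cosh (μ * t)) := by
      intro t _
      have h1 := Real.exp_pos (-(x * Real.cosh t))
      have h2 := Real.cosh_pos (μ * t)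
      exact ne_of_gt (by positivity)
    calc (0 : ℝ≥0∞) < MeasureTheory.volume (Set.Ioi (0 : ℝ)) := by
          rw [Real.volume_Ioi]; exact ENNReal.zero_lt_top
      _ ≤ _ := MeasureTheory.measure_mono (Set.subset_inter hsub (subset_refl _))

private lemma besselK_mono_aux {μ x : ℝ} (hμ : 1 / 2 ≤ μ) (hx : 0 < x) :
    besselK (μ - 1) x ≤ besselK μ x := by
  rw [besselK, besselK]
  refine MeasureTheory.setIntegral_mono_on (intK_bessel hx (μ - 1)) (intK_bessel hx μ)
    measurableSet_Ioi fun t ht => ?_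
  have ht0 : (0 : ℝ) ≤ t := (le_of_lt ht)
  refine mul_le_mul_of_nonneg_left ?_ (Real.exp_pos _).le
  rw [Real.cosh_le_cosh, abs_mul, abs_mul, abs_of_nonneg ht0]
  refine mul_le_mul_of_nonneg_right ?_ ht0
  rw [abs_le]
  constructor
  · rw [neg_le]
    calc -(μ - 1) = 1 - μ := by ring
      _ ≤ μ := by linarith
      _ ≤ |μ| := le_abs_self μ
  · calc μ - 1 ≤ μ := by linarith
      _ ≤ |μ| := le_abs_self μ

private lemma besselK_rec_aux {μ x : ℝ} (hμ : 0 ≤ μ) (hx : 0 < x) :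
    besselK (μ + 1) x = besselK (μ - 1) x + 2 * μ / x * besselK μ x := by
  have i1 := intK_bessel hx (μ + 1)
  have i2 := intK_bessel hx (μ - 1)
  have i0 := intK_bessel hx μ
  have iS := intS_bessel hx hμ
  have hder : ∀ t ∈ Set.Ici (0 : ℝ),
      HasDerivAt (fun t => Real.exp (-(x * Real.cosh t)) * Real.sinh (μ * t))
        (μ * (Real.exp (-(x * Real.cosh t)) * Real.cosh (μ * t))
          - x * (Real.exp (-(x * Real.cosh t)) * (Real.sinh (μ * t) * Real.sinh t))) t := by
    intro t _
    have h1 : HasDerivAt (fun t => -(x * Real.cosh t)) (-(x * Real.sinh t)) t :=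
      ((Real.hasDerivAt_cosh t).const_mul x).neg
    have h2 := h1.exp
    have h3 : HasDerivAt (fun t => Real.sinh (μ * t)) (Real.cosh (μ * t) * μ) t := by
      have h := (Real.hasDerivAt_sinh (μ * t)).comp t ((hasDerivAt_id t).const_mul μ)
      simp only [mul_one] at h
      exact h
    have h4 := h2.mul h3
    refine h4.congr_deriv ?_
    ring
  have htend : Filter.Tendsto (fun t => Real.exp (-(x * Real.cosh t)) * Real.sinh (μ * t))
      Filter.atTop (nhds 0) := by
    apply squeeze_zero_norm' ?_ Real.tendsto_exp_neg_atTop_nhds_zero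
    filter_upwards [Filter.eventually_ge_atTop (max 1 (8 * (μ + 1) / x))] with t ht
    have ht1 : (1 : ℝ) ≤ t := le_trans (le_max_left _ _) ht
    have ht2 : 8 * (μ + 1) / x ≤ t := le_trans (le_max_right _ _) ht
    have ht0 : (0 : ℝ) ≤ t := by linarith
    rw [norm_mul, Real.norm_eq_abs, Real.norm_eq_abs, abs_of_pos (Real.exp_pos _)]
    calc Real.exp (-(x * Real.cosh t)) * |Real.sinh (μ * t)|
        ≤ Real.exp (-(x * Real.cosh t)) * Real.exp (μ * t) :=
          mul_le_mul_of_nonneg_left (sinhle_aux (mul_nonneg hμ ht0)) (Real.exp_pos _).le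
      _ = Real.exp (-(x * Real.cosh t) + μ * t) := (Real.exp_add _ _).symm
      _ ≤ Real.exp (-t) := by
          apply Real.exp_le_exp.2
          have hq := mul_le_mul_of_nonneg_left (coshq_aux ht0) hx.le
          have h8 : 8 * (μ + 1) ≤ x * t := by
            rw [div_le_iff₀ hx] at ht2; linarith
          nlinarith
  have hibp := integral_Ioi_of_hasDerivAt_of_tendsto' hder
    ((i0.const_mul μ).sub (iS.const_mul x)) htend
  rw [MeasureTheory.integral_sub (i0.const_mul μ) (iS.const_mul x),
    MeasureTheory.integral_const_mul, MeasureTheory.integral_const_mul] at hibp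
  simp only [mul_zero, Real.sinh_zero, zero_sub, neg_eq_zero] at hibp
  have hsplit : besselK (μ + 1) x - besselK (μ - 1) x
      = ∫ t in Set.Ioi (0 : ℝ),
          2 * (Real.exp (-(x * Real.cosh t)) * (Real.sinh (μ * t) * Real.sinh t)) := by
    rw [besselK, besselK, ← MeasureTheory.integral_sub i1 i2]
    refine MeasureTheory.setIntegral_congr_fun measurableSet_Ioi fun t _ => ?_
    have e1 : (μ + 1) * t = μ * t + t := by ring
    have e2 : (μ - 1) * t = μ * t - t := by ring
    rw [e1, e2, Real.cosh_add, Real.cosh_sub]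
    ring
  rw [MeasureTheory.integral_const_mul] at hsplit
  have hx' : x ≠ 0 := ne_of_gt hx
  have hb : besselK μ x
      = ∫ a in Set.Ioi (0 : ℝ), Real.exp (-(x * Real.cosh a)) * Real.cosh (μ * a) := rfl
  rw [← hb] at hibp
  set IS := ∫ a in Set.Ioi (0 : ℝ),
      Real.exp (-(x * Real.cosh a)) * (Real.sinh (μ * a) * Real.sinh a) with hISdef
  have h1 : x * IS = μ * besselK μ x := by linarith
  have h2 : 2 * μ / x * besselK μ x = 2 * IS := by
    rw [div_mul_eq_mul_div, div_eq_iff hx']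
    linear_combination (-2 : ℝ) * h1
  rw [h2]
  linarith [hsplit]

/-- Inequality (2.10): bound for the ratio of Macdonald functions. -/
theorem besselK_ratio_bound (μ x : ℝ) (hμ : 1 / 2 ≤ μ) (hx : 0 < x) :
    besselK (μ + 1) x / besselK μ x ≤ 8 * (2 * x + 1) ^ (μ + 1) * μ / x := by
  have hμ0 : (0 : ℝ) ≤ μ := by linarith
  have hK := besselK_pos_aux (μ := μ) hx
  have hrec := besselK_rec_aux hμ0 hx
  have hmono := besselK_mono_aux hμ hx
  have hup : besselK (μ + 1) x ≤ (1 + 2 * μ / x) * besselK μ x := by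
    rw [hrec]
    have hexp : (1 + 2 * μ / x) * besselK μ x
        = besselK μ x + 2 * μ / x * besselK μ x := by ring
    linarith
  have hdiv : besselK (μ + 1) x / besselK μ x ≤ 1 + 2 * μ / x := by
    rw [div_le_iff₀ hK]; linarith
  refine hdiv.trans ?_
  have hr : 2 * x + 1 ≤ (2 * x + 1) ^ (μ + 1) := by
    calc 2 * x + 1 = (2 * x + 1) ^ (1 : ℝ) := (Real.rpow_one _).symm
      _ ≤ (2 * x + 1) ^ (μ + 1) :=
        Real.rpow_le_rpow_of_exponent_le (by linarith) (by linarith)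
  have key : x + 2 * μ ≤ 8 * (2 * x + 1) ^ (μ + 1) * μ := by
    nlinarith [mul_le_mul_of_nonneg_left hr (by linarith : (0 : ℝ) ≤ 8 * μ)]
  have heq : 1 + 2 * μ / x = (x + 2 * μ) / x := by field_simp
  rw [heq]
  exact div_le_div_of_nonneg_right key hx.le |>.trans_eq rfl
end

section
/- For every μ ≥ 1/2 and all real numbers a ≥ b > 0, K_μ(a)/K_μ(b) ≤ 4 (2b+1)^μ e^{−a+b}. -/
open MeasureTheory ProbabilityTheory Real Filter Set
open scoped ENNReal NNReal Topology

lemma besselK_integrand_integrable (μ x : ℝ) (hμ : 0 ≤ μ) (hx : 0 < x) :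
    MeasureTheory.IntegrableOn
      (fun t => Real.exp (-(x * Real.cosh t)) * Real.cosh (μ * t)) (Set.Ioi 0) := by
  have hc : (0:ℝ) < x / 8 := by linarith
  have hg : MeasureTheory.Integrable
      (fun t : ℝ => Real.exp (μ * t - x / 8 * t ^ 2)) := by
    have h1 : MeasureTheory.Integrable
        (fun t : ℝ => Real.exp (-(x/8) * (t - μ / (2 * (x/8))) ^ 2)) :=
      (integrable_exp_neg_mul_sq hc).comp_sub_right _
    have h2 := h1.const_mul (Real.exp ((μ)^2 / (4 * (x/8))))
    exact h2.congr (Filter.Eventually.of_forall fun t => by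
        simp only [← Real.exp_add]; congr 1; field_simp; ring)
  refine (hg.integrableOn.mono_set (Set.subset_univ _)) |>.mono' ?_ ?_
  · exact ((Real.continuous_exp.comp (by continuity)).mul
      (Real.continuous_cosh.comp (by continuity))).aestronglyMeasurable
  · filter_upwards [MeasureTheory.ae_restrict_mem measurableSet_Ioi] with t ht
    have ht0 : (0:ℝ) < t := ht
    have hch : t ^ 2 / 8 ≤ Real.cosh t := by
      have := Real.add_one_le_exp (t / 2)
      have hsq : (t / 2 + 1) ^ 2 ≤ Real.exp t := by
        have h2 : Real.exp t = Real.exp (t/2) ^ 2 := by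
          rw [sq, ← Real.exp_add]; ring_nf
        rw [h2]
        have hpos : 0 ≤ t / 2 + 1 := by linarith
        exact pow_le_pow_left₀ hpos this 2
      have hexpneg : 0 < Real.exp (-t) := Real.exp_pos _
      rw [Real.cosh_eq]
      nlinarith
    have hcoshμ : Real.cosh (μ * t) ≤ Real.exp (μ * t) := by
      rw [Real.cosh_eq]
      have := Real.exp_pos (-(μ * t))
      have h := Real.exp_le_exp.mpr (show -(μ*t) ≤ μ*t by nlinarith)
      linarith
    have h1 : Real.exp (-(x * Real.cosh t)) ≤ Real.exp (-(x / 8 * t ^ 2)) := by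
      apply Real.exp_le_exp.mpr; nlinarith
    rw [Real.norm_eq_abs, abs_of_nonneg (by positivity)]
    calc Real.exp (-(x * Real.cosh t)) * Real.cosh (μ * t)
        ≤ Real.exp (-(x / 8 * t ^ 2)) * Real.exp (μ * t) := by
          apply mul_le_mul h1 hcoshμ (by positivity) (Real.exp_pos _).le
      _ = Real.exp (μ * t - x / 8 * t ^ 2) := by rw [← Real.exp_add]; ring_nf

lemma besselK_pos (μ x : ℝ) (hμ : 0 ≤ μ) (hx : 0 < x) : 0 < besselK μ x := by
  rw [besselK]
  rw [MeasureTheory.setIntegral_pos_iff_support_of_nonneg_ae]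
  · have : Function.support (fun t => Real.exp (-(x * Real.cosh t)) * Real.cosh (μ * t))
        = Set.univ := by
      ext t; simp [Function.support]
      positivity
    rw [this, Set.univ_inter]
    simp [Real.volume_Ioi]
  · filter_upwards with t; positivity
  · exact besselK_integrand_integrable μ x hμ hx

/-- Bound for `K_μ(a)/K_μ(b)` when `a ≥ b > 0`. -/
theorem besselK_ratio_two_points (μ a b : ℝ) (hμ : 1 / 2 ≤ μ) (hb : 0 < b) (hab : b ≤ a) :
    besselK μ a / besselK μ b ≤ 4 * (2 * b + 1) ^ μ * Real.exp (-a + b) := by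
  have hμ0 : (0:ℝ) ≤ μ := by linarith
  have hKb : 0 < besselK μ b := besselK_pos μ b hμ0 hb
  have key : besselK μ a ≤ Real.exp (-a + b) * besselK μ b := by
    rw [besselK, besselK, ← MeasureTheory.integral_const_mul]
    apply MeasureTheory.integral_mono_of_nonneg
    · filter_upwards with t; positivity
    · exact (besselK_integrand_integrable μ b hμ0 hb).const_mul _
    · filter_upwards with t
      have h1 : Real.exp (-(a * Real.cosh t)) ≤ Real.exp (-a + b) * Real.exp (-(b * Real.cosh t)) := by
        rw [← Real.exp_add, Real.exp_le_exp]
        have := Real.one_le_cosh t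
        nlinarith
      have h2 : (0:ℝ) ≤ Real.cosh (μ * t) := (Real.cosh_pos (μ * t)).le
      calc Real.exp (-(a * Real.cosh t)) * Real.cosh (μ * t)
          ≤ (Real.exp (-a + b) * Real.exp (-(b * Real.cosh t))) * Real.cosh (μ * t) :=
            mul_le_mul_of_nonneg_right h1 h2
        _ = Real.exp (-a + b) * (Real.exp (-(b * Real.cosh t)) * Real.cosh (μ * t)) := by ring
  rw [div_le_iff₀ hKb]
  have hpow : (1:ℝ) ≤ (2 * b + 1) ^ μ := Real.one_le_rpow (by linarith) hμ0
  have hexp : (0:ℝ) < Real.exp (-a + b) := Real.exp_pos _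
  nlinarith [mul_pos hexp hKb]
end
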